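/- arXiv:0710.0800 — 3 statements merged into one kernel-verified Lean document; each statement's English description precedes it below -/
import Mathlib

section
/- The thermodynamic limit of the pressure exists: there is a real number p (depending on the parameters α, J11, J12, J22, h1, h2) such that p_N → p as N → ∞. -/
open Real Filter

noncomputable def spin (b : Bool) : ℝ := if b then 1 else -1

/-- The Hamiltonian of the bipartite mean field model: the first `N1` sites form
block `A`, the remaining `N2` sites form block `B`. -/
noncomputable def ham (J11 J12 J22 h1 h2 : ℝ) (N1 N2 : ℕ)
    (σ : Fin (N1 + N2) → Bool) : ℝ :=
  -(1 / (2 * ((N1 + N2 : ℕ) : ℝ))) *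
      (J11 * ∑ i : Fin (N1 + N2), ∑ j : Fin (N1 + N2),
          (if (i : ℕ) < N1 ∧ (j : ℕ) < N1 then spin (σ i) * spin (σ j) else 0)
        + 2 * J12 * ∑ i : Fin (N1 + N2), ∑ j : Fin (N1 + N2),
          (if (i : ℕ) < N1 ∧ N1 ≤ (j : ℕ) then spin (σ i) * spin (σ j) else 0)
        + J22 * ∑ i : Fin (N1 + N2), ∑ j : Fin (N1 + N2),
          (if N1 ≤ (i : ℕ) ∧ N1 ≤ (j : ℕ) then spin (σ i) * spin (σ j) else 0))
    - h1 * ∑ i : Fin (N1 + N2), (if (i : ℕ) < N1 then spin (σ i) else 0)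
    - h2 * ∑ i : Fin (N1 + N2), (if N1 ≤ (i : ℕ) then spin (σ i) else 0)

/-- The pressure per particle `p_N = (1/N) log Σ_σ exp(-H_N(σ))`. -/
noncomputable def pressure (J11 J12 J22 h1 h2 : ℝ) (N1 N2 : ℕ) : ℝ :=
  (1 / ((N1 + N2 : ℕ) : ℝ)) *
    Real.log (∑ σ : Fin (N1 + N2) → Bool,
      Real.exp (-(ham J11 J12 J22 h1 h2 N1 N2 σ)))

namespace BMF
open Finset

lemma pow_le_exp_mul_factorial (n : ℕ) : (n:ℝ)^n ≤ Real.exp n * (Nat.factorial n) := by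
  induction n with
  | zero => simp
  | succ n ih =>
    have hkey : ((n:ℝ)+1)^n ≤ Real.exp 1 * (n:ℝ)^n := by
      rcases Nat.eq_zero_or_pos n with h | h
      · subst h; simpa using Real.one_le_exp zero_le_one
      · have hn : (0:ℝ) < n := by exact_mod_cast h
        have h1 : (n:ℝ) + 1 ≤ n * Real.exp (1/n) := by
          have h2 := Real.add_one_le_exp (1/(n:ℝ))
          have h0 : (n:ℝ) * (1/(n:ℝ) + 1) = n + 1 := by field_simp; ring
          calc (n:ℝ) + 1 = n * (1/(n:ℝ) + 1) := h0.symm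
          _ ≤ n * Real.exp (1/n) := mul_le_mul_of_nonneg_left (by linarith) hn.le
        calc ((n:ℝ)+1)^n ≤ ((n:ℝ) * Real.exp (1/n))^n :=
              pow_le_pow_left₀ (by positivity) h1 _
        _ = (n:ℝ)^n * Real.exp (1/n) ^ n := by rw [mul_pow]
        _ = (n:ℝ)^n * Real.exp 1 := by
              rw [← Real.exp_nat_mul]; congr 1; field_simp
        _ = Real.exp 1 * (n:ℝ)^n := by ring
    have hpos : (0:ℝ) ≤ (n:ℝ)+1 := by positivity
    push_cast [Nat.factorial_succ]
    calc ((n:ℝ)+1)^(n+1) = ((n:ℝ)+1) * ((n:ℝ)+1)^n := by ring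
    _ ≤ ((n:ℝ)+1) * (Real.exp 1 * (n:ℝ)^n) := mul_le_mul_of_nonneg_left hkey hpos
    _ ≤ ((n:ℝ)+1) * (Real.exp 1 * (Real.exp n * (Nat.factorial n))) := by
        have : Real.exp 1 * (n:ℝ)^n ≤ Real.exp 1 * (Real.exp n * (Nat.factorial n)) :=
          mul_le_mul_of_nonneg_left ih (Real.exp_pos 1).le
        exact mul_le_mul_of_nonneg_left this hpos
    _ = Real.exp ((n:ℝ)+1) * (((n:ℝ)+1) * (Nat.factorial n)) := by rw [Real.exp_add]; ring

lemma factorial_le (n : ℕ) (hn : 1 ≤ n) :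
    ((Nat.factorial n : ℕ) : ℝ) ≤ Real.exp 1 * n * ((n:ℝ)^n / Real.exp n) := by
  induction n with
  | zero => omega
  | succ n ih =>
    rcases Nat.eq_zero_or_pos n with h | h
    · subst h
      have h2 : (2:ℝ) ≤ Real.exp 1 := by
        have := Real.add_one_le_exp (1:ℝ); linarith
      have h3 : (0:ℝ) < Real.exp 1 := Real.exp_pos 1
      norm_num [Nat.factorial]
      all_goals first
      | (rw [div_le_iff h3]; nlinarith)
      | nlinarith
    · have hn : (0:ℝ) < n := by exact_mod_cast h
      have hkey : Real.exp 1 * (n:ℝ)^(n+1) ≤ ((n:ℝ)+1)^(n+1) := by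
        have h1 : Real.exp (1/((n:ℝ)+1)) ≤ ((n:ℝ)+1)/n := by
          have h2 : 1 - 1/((n:ℝ)+1) ≤ Real.exp (-(1/((n:ℝ)+1))) := by
            have := Real.add_one_le_exp (-(1/((n:ℝ)+1))); linarith
          have h3 : (1 - 1/((n:ℝ)+1)) * Real.exp (1/((n:ℝ)+1)) ≤ 1 := by
            calc (1 - 1/((n:ℝ)+1)) * Real.exp (1/((n:ℝ)+1))
                ≤ Real.exp (-(1/((n:ℝ)+1))) * Real.exp (1/((n:ℝ)+1)) :=
                  mul_le_mul_of_nonneg_right h2 (Real.exp_pos _).le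
            _ = 1 := by rw [← Real.exp_add]; simp
          have h3' : (n:ℝ) * Real.exp (1/((n:ℝ)+1)) ≤ (n:ℝ) + 1 := by
            have h := mul_le_mul_of_nonneg_right h3
              (show (0:ℝ) ≤ (n:ℝ)+1 by positivity)
            have h4 : (1 - 1/((n:ℝ)+1)) * Real.exp (1/((n:ℝ)+1)) * ((n:ℝ)+1)
                = (n:ℝ) * Real.exp (1/((n:ℝ)+1)) := by field_simp; ring
            rw [h4] at h; linarith
          rw [le_div_iff₀ hn, mul_comm]; exact h3'
        have h5 : Real.exp 1 ≤ (((n:ℝ)+1)/n)^(n+1) := by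
          calc Real.exp 1 = Real.exp (1/((n:ℝ)+1)) ^ (n+1) := by
                rw [← Real.exp_nat_mul]; congr 1; push_cast; field_simp
          _ ≤ (((n:ℝ)+1)/n)^(n+1) := pow_le_pow_left₀ (Real.exp_pos _).le h1 _
        calc Real.exp 1 * (n:ℝ)^(n+1) ≤ (((n:ℝ)+1)/n)^(n+1) * (n:ℝ)^(n+1) :=
              mul_le_mul_of_nonneg_right h5 (by positivity)
        _ = ((n:ℝ)+1)^(n+1) := by rw [div_pow, div_mul_cancel₀]; positivity
      have ihn := ih h
      have hdiv : (n:ℝ)^(n+1) / Real.exp n ≤ ((n:ℝ)+1)^(n+1) / (Real.exp n * Real.exp 1) := by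
        rw [div_le_div_iff₀ (by positivity) (by positivity)]
        nlinarith [mul_le_mul_of_nonneg_right hkey (Real.exp_pos (n:ℝ)).le]
      have hcast : ((Nat.factorial (n+1) : ℕ) : ℝ) = ((n:ℝ)+1) * (Nat.factorial n) := by
        push_cast [Nat.factorial_succ]; ring
      rw [hcast]
      push_cast
      rw [Real.exp_add]
      calc ((n:ℝ)+1) * (Nat.factorial n)
          ≤ ((n:ℝ)+1) * (Real.exp 1 * n * ((n:ℝ)^n / Real.exp n)) :=
            mul_le_mul_of_nonneg_left ihn (by positivity)
      _ = (Real.exp 1 * ((n:ℝ)+1)) * ((n:ℝ)^(n+1) / Real.exp n) * ((n:ℝ)+1)⁻¹ * ((n:ℝ)+1) := by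
            field_simp; ring
      _ ≤ (Real.exp 1 * ((n:ℝ)+1)) * (((n:ℝ)+1)^(n+1) / (Real.exp n * Real.exp 1)) * ((n:ℝ)+1)⁻¹ * ((n:ℝ)+1) := by
            have := mul_le_mul_of_nonneg_left hdiv
              (show (0:ℝ) ≤ Real.exp 1 * ((n:ℝ)+1) by positivity)
            have h7 := mul_le_mul_of_nonneg_right this
              (show (0:ℝ) ≤ ((n:ℝ)+1)⁻¹ by positivity)
            exact mul_le_mul_of_nonneg_right h7 (by positivity)
      _ = Real.exp 1 * ((n:ℝ)+1) * (((n:ℝ)+1)^(n+1) / (Real.exp n * Real.exp 1)) := by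
            field_simp

noncomputable def ent (x : ℝ) : ℝ := Real.negMulLog x + Real.negMulLog (1-x)

lemma log_factorial_lb (n : ℕ) :
    (n:ℝ) * Real.log n - n ≤ Real.log (Nat.factorial n) := by
  have h := pow_le_exp_mul_factorial n
  have hpos : (0:ℝ) < (n:ℝ)^n := by
    rcases Nat.eq_zero_or_pos n with h0 | h0
    · subst h0; norm_num
    · have : (0:ℝ) < n := by exact_mod_cast h0
      positivity
  have := Real.log_le_log hpos h
  rw [Real.log_pow, Real.log_mul (Real.exp_ne_zero _)
    (by exact_mod_cast (Nat.factorial_pos n).ne'), Real.log_exp] at this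
  linarith

lemma log_factorial_ub (n : ℕ) :
    Real.log (Nat.factorial n) ≤ (n:ℝ) * Real.log n - n + (1 + Real.log (n+1)) := by
  rcases Nat.eq_zero_or_pos n with h0 | h0
  · subst h0
    norm_num [Nat.factorial]
  · have hn : (0:ℝ) < n := by exact_mod_cast h0
    have h := factorial_le n h0
    have hfp : (0:ℝ) < (Nat.factorial n : ℝ) := by exact_mod_cast Nat.factorial_pos n
    have := Real.log_le_log hfp h
    rw [Real.log_mul (by positivity) (by positivity), Real.log_mul (Real.exp_ne_zero _) (by positivity),
      Real.log_div (by positivity) (Real.exp_ne_zero _), Real.log_pow, Real.log_exp, Real.log_exp] at this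
    have hle : Real.log n ≤ Real.log (n+1) := Real.log_le_log hn (by linarith)
    linarith

lemma mul_ent_eq {n k : ℕ} (hk : k ≤ n) (hn : 1 ≤ n) :
    (n:ℝ) * ent ((k:ℝ)/n) =
      (n:ℝ) * Real.log n - (k:ℝ) * Real.log k - ((n:ℝ)-(k:ℝ)) * Real.log ((n:ℝ)-(k:ℝ)) := by
  have hn0 : (0:ℝ) < n := by exact_mod_cast hn
  have h1 : 1 - (k:ℝ)/n = ((n:ℝ)-(k:ℝ))/n := by field_simp
  rcases Nat.eq_zero_or_pos k with h0 | h0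
  · subst h0
    simp [ent, Real.negMulLog]
  · rcases eq_or_lt_of_le hk with he | hlt
    · subst he
      have hd : (k:ℝ)/k = 1 := div_self hn0.ne'
      rw [show ((k:ℝ)-(k:ℝ)) = 0 by ring] at h1 ⊢
      simp [ent, hd, h1]
    · have hk0 : (0:ℝ) < k := by exact_mod_cast h0
      have hnk : (0:ℝ) < (n:ℝ)-(k:ℝ) := by
        have : (k:ℝ) < n := by exact_mod_cast hlt
        linarith
      rw [ent, h1, Real.negMulLog, Real.negMulLog,
        Real.log_div (by positivity) (by positivity),
        Real.log_div (by positivity) (by positivity)]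
      field_simp
      ring

lemma abs_log_choose_sub_ent {n k : ℕ} (hn : 1 ≤ n) (hk : k ≤ n) :
    |Real.log (n.choose k) - (n:ℝ) * ent ((k:ℝ)/n)| ≤ 3*(1 + Real.log (n+1)) := by
  have hn0 : (0:ℝ) < n := by exact_mod_cast hn
  have hfact := Nat.choose_mul_factorial_mul_factorial hk
  have hcast : ((n.choose k : ℕ):ℝ) * (Nat.factorial k) * (Nat.factorial (n-k))
      = (Nat.factorial n) := by exact_mod_cast hfact
  have hc0 : (0:ℝ) < (n.choose k : ℝ) := by exact_mod_cast Nat.choose_pos hk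
  have hk0 : (0:ℝ) < (Nat.factorial k : ℝ) := by exact_mod_cast Nat.factorial_pos k
  have hnk0 : (0:ℝ) < (Nat.factorial (n-k) : ℝ) := by exact_mod_cast Nat.factorial_pos (n-k)
  have hlog : Real.log (n.choose k) = Real.log (Nat.factorial n)
      - Real.log (Nat.factorial k) - Real.log (Nat.factorial (n-k)) := by
    rw [← hcast, Real.log_mul (by positivity) hnk0.ne', Real.log_mul hc0.ne' hk0.ne']
    ring
  have hsub : ((n-k : ℕ):ℝ) = (n:ℝ) - (k:ℝ) := Nat.cast_sub hk
  have hid := mul_ent_eq hk hn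
  have l1 := log_factorial_lb n
  have l2 := log_factorial_ub n
  have l3 := log_factorial_lb k
  have l4 := log_factorial_ub k
  have l5 := log_factorial_lb (n-k)
  have l6 := log_factorial_ub (n-k)
  rw [hsub] at l5 l6
  have hkn : Real.log ((k:ℝ)+1) ≤ Real.log ((n:ℝ)+1) :=
    Real.log_le_log (by positivity) (by exact_mod_cast Nat.succ_le_succ hk)
  have hkn2 : Real.log (((n-k:ℕ):ℝ)+1) ≤ Real.log ((n:ℝ)+1) :=
    Real.log_le_log (by positivity) (by exact_mod_cast Nat.succ_le_succ (Nat.sub_le n k))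
  rw [hsub] at hkn2
  have hlogn1 : (0:ℝ) ≤ Real.log ((n:ℝ)+1) :=
    Real.log_nonneg (by linarith)
  have hnn : (n:ℝ) = (k:ℝ) + ((n:ℝ)-(k:ℝ)) := by ring
  rw [abs_le]
  constructor <;> [skip; skip] <;> (rw [hlog, hid]; push_cast at l4 l6 ⊢; linarith)


/-- unnormalized energy -/
noncomputable def EN (J11 J12 J22 h1 h2 : ℝ) (N : ℕ) (s t : ℝ) : ℝ :=
  (1 / (2 * (N:ℝ))) * (J11*s^2 + 2*J12*s*t + J22*t^2) + h1*s + h2*t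

def boolFunEquiv (n : ℕ) : Finset (Fin n) ≃ (Fin n → Bool) where
  toFun s i := decide (i ∈ s)
  invFun σ := univ.filter (fun i => σ i = true)
  left_inv s := by ext i; simp
  right_inv σ := by funext i; simp

lemma sum_fun_bool (n : ℕ) (f : ℕ → ℝ) :
    ∑ σ : Fin n → Bool, f ((univ.filter (fun i => σ i = true)).card)
      = ∑ k ∈ range (n+1), (n.choose k : ℝ) * f k := by
  have h1 : ∑ σ : Fin n → Bool, f ((univ.filter (fun i => σ i = true)).card)
      = ∑ s : Finset (Fin n), f s.card := by
    refine (Fintype.sum_equiv (boolFunEquiv n) (fun s => f s.card) _ fun s => ?_).symm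
    congr 1
    have : (univ.filter (fun i => boolFunEquiv n s i = true)) = s := by
      ext i; simp [boolFunEquiv]
    rw [this]
  rw [h1]
  have h2 : (univ : Finset (Finset (Fin n))) = (univ : Finset (Fin n)).powerset :=
    (Finset.powerset_univ).symm
  rw [h2, Finset.sum_powerset_apply_card, Finset.card_univ, Fintype.card_fin]
  refine Finset.sum_congr rfl fun k hk => ?_
  rw [nsmul_eq_mul]

lemma sum_spin {m : ℕ} (τ : Fin m → Bool) :
    ∑ i, spin (τ i) = 2 * ((univ.filter (fun i => τ i = true)).card : ℝ) - m := by
  have h := Finset.sum_filter_add_sum_filter_not (univ : Finset (Fin m))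
    (fun i => τ i = true) (fun i => spin (τ i))
  have h1 : ∑ i ∈ univ.filter (fun i => τ i = true), spin (τ i)
      = ((univ.filter (fun i => τ i = true)).card : ℝ) := by
    rw [Finset.sum_congr rfl (fun i hi => ?_), Finset.sum_const, nsmul_eq_mul, mul_one]
    · simp only [Finset.mem_filter] at hi
      simp [spin, hi.2]
  have h2 : ∑ i ∈ univ.filter (fun i => ¬(τ i = true)), spin (τ i)
      = -((univ.filter (fun i => ¬(τ i = true))).card : ℝ) := by
    rw [Finset.sum_congr rfl (fun i hi => ?_), Finset.sum_const, nsmul_eq_mul, mul_neg_one]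
    · simp only [Finset.mem_filter] at hi
      simp [spin, hi.2]
  have h3 : (univ.filter (fun i => τ i = true)).card
      + (univ.filter (fun i => ¬(τ i = true))).card = m := by
    rw [Finset.card_filter_add_card_filter_not, Finset.card_univ, Fintype.card_fin]
  have h4 : ((univ.filter (fun i => ¬(τ i = true))).card : ℝ)
      = (m : ℝ) - ((univ.filter (fun i => τ i = true)).card : ℝ) := by
    have := congrArg (fun x : ℕ => (x : ℝ)) h3
    push_cast at this
    linarith
  rw [← h, h1, h2, h4]
  ring

/-- block sums -/
noncomputable def S1 (N1 N2 : ℕ) (σ : Fin (N1+N2) → Bool) : ℝ :=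
  ∑ i : Fin (N1+N2), (if (i : ℕ) < N1 then spin (σ i) else 0)
noncomputable def S2 (N1 N2 : ℕ) (σ : Fin (N1+N2) → Bool) : ℝ :=
  ∑ i : Fin (N1+N2), (if N1 ≤ (i : ℕ) then spin (σ i) else 0)

lemma neg_ham_eq (J11 J12 J22 h1 h2 : ℝ) (N1 N2 : ℕ) (σ : Fin (N1+N2) → Bool) :
    -(ham J11 J12 J22 h1 h2 N1 N2 σ)
      = EN J11 J12 J22 h1 h2 (N1+N2) (S1 N1 N2 σ) (S2 N1 N2 σ) := by
  have key : ∀ (P Q : ℕ → Prop) [DecidablePred P] [DecidablePred Q],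
      ∑ i : Fin (N1+N2), ∑ j : Fin (N1+N2),
        (if P (i:ℕ) ∧ Q (j:ℕ) then spin (σ i) * spin (σ j) else 0)
      = (∑ i : Fin (N1+N2), if P (i:ℕ) then spin (σ i) else 0)
        * (∑ j : Fin (N1+N2), if Q (j:ℕ) then spin (σ j) else 0) := by
    intro P Q _ _
    rw [Finset.sum_mul_sum]
    refine Finset.sum_congr rfl fun i _ => Finset.sum_congr rfl fun j _ => ?_
    by_cases hi : P (i:ℕ) <;> by_cases hj : Q (j:ℕ) <;> simp [hi, hj]
  unfold ham EN S1 S2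
  rw [key (fun i => i < N1) (fun j => j < N1), key (fun i => i < N1) (fun j => N1 ≤ j),
    key (fun i => N1 ≤ i) (fun j => N1 ≤ j)]
  push_cast
  ring


lemma S1_eq (N1 N2 : ℕ) (σ : Fin (N1+N2) → Bool) :
    S1 N1 N2 σ = ∑ i : Fin N1, spin (σ (Fin.castAdd N2 i)) := by
  unfold S1
  rw [Fin.sum_univ_add]
  simp

lemma S2_eq (N1 N2 : ℕ) (σ : Fin (N1+N2) → Bool) :
    S2 N1 N2 σ = ∑ i : Fin N2, spin (σ (Fin.natAdd N1 i)) := by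
  unfold S2
  rw [Fin.sum_univ_add]
  rw [Finset.sum_eq_zero (fun (i : Fin N1) _ => by simp [Nat.not_le.mpr i.isLt]), zero_add]
  simp

def blockEquiv (N1 N2 : ℕ) : (Fin N1 → Bool) × (Fin N2 → Bool) ≃ (Fin (N1+N2) → Bool) :=
  (Equiv.sumArrowEquivProdArrow _ _ _).symm.trans
    (Equiv.arrowCongr finSumFinEquiv (Equiv.refl Bool))

lemma blockEquiv_castAdd {N1 N2 : ℕ} (τ : (Fin N1 → Bool) × (Fin N2 → Bool)) (i : Fin N1) :
    blockEquiv N1 N2 τ (Fin.castAdd N2 i) = τ.1 i := by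
  simp [blockEquiv, Equiv.sumArrowEquivProdArrow, Equiv.arrowCongr]

lemma blockEquiv_natAdd {N1 N2 : ℕ} (τ : (Fin N1 → Bool) × (Fin N2 → Bool)) (i : Fin N2) :
    blockEquiv N1 N2 τ (Fin.natAdd N1 i) = τ.2 i := by
  simp [blockEquiv, Equiv.sumArrowEquivProdArrow, Equiv.arrowCongr]

lemma Z_eq (J11 J12 J22 h1 h2 : ℝ) (N1 N2 : ℕ) :
    ∑ σ : Fin (N1+N2) → Bool, Real.exp (-(ham J11 J12 J22 h1 h2 N1 N2 σ))
      = ∑ k1 ∈ range (N1+1), ∑ k2 ∈ range (N2+1),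
          ((N1.choose k1 : ℝ) * (N2.choose k2 : ℝ)) *
            Real.exp (EN J11 J12 J22 h1 h2 (N1+N2)
              (2*(k1:ℝ)-(N1:ℝ)) (2*(k2:ℝ)-(N2:ℝ))) := by
  have step1 : ∑ σ : Fin (N1+N2) → Bool, Real.exp (-(ham J11 J12 J22 h1 h2 N1 N2 σ))
      = ∑ τ1 : Fin N1 → Bool, ∑ τ2 : Fin N2 → Bool,
          Real.exp (EN J11 J12 J22 h1 h2 (N1+N2)
            (2*((univ.filter (fun i => τ1 i = true)).card : ℝ) - N1)
            (2*((univ.filter (fun i => τ2 i = true)).card : ℝ) - N2)) := by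
    rw [Finset.sum_congr rfl (fun σ _ => congrArg Real.exp
      (neg_ham_eq J11 J12 J22 h1 h2 N1 N2 σ))]
    rw [← Fintype.sum_equiv (blockEquiv N1 N2)
      (fun τ => Real.exp (EN J11 J12 J22 h1 h2 (N1+N2)
        (S1 N1 N2 (blockEquiv N1 N2 τ)) (S2 N1 N2 (blockEquiv N1 N2 τ))))
      (fun σ => Real.exp (EN J11 J12 J22 h1 h2 (N1+N2) (S1 N1 N2 σ) (S2 N1 N2 σ)))
      (fun τ => rfl)]
    rw [Fintype.sum_prod_type]
    refine Finset.sum_congr rfl fun τ1 _ => Finset.sum_congr rfl fun τ2 _ => ?_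
    have hS1 : S1 N1 N2 (blockEquiv N1 N2 (τ1, τ2))
        = 2*((univ.filter (fun i => τ1 i = true)).card : ℝ) - N1 := by
      rw [S1_eq, Finset.sum_congr rfl (fun i _ => congrArg spin (blockEquiv_castAdd (τ1, τ2) i))]
      exact sum_spin τ1
    have hS2 : S2 N1 N2 (blockEquiv N1 N2 (τ1, τ2))
        = 2*((univ.filter (fun i => τ2 i = true)).card : ℝ) - N2 := by
      rw [S2_eq, Finset.sum_congr rfl (fun i _ => congrArg spin (blockEquiv_natAdd (τ1, τ2) i))]
      exact sum_spin τ2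
    rw [hS1, hS2]
  rw [step1]
  have step2 : ∀ τ1 : Fin N1 → Bool,
      ∑ τ2 : Fin N2 → Bool, Real.exp (EN J11 J12 J22 h1 h2 (N1+N2)
          (2*((univ.filter (fun i => τ1 i = true)).card : ℝ) - N1)
          (2*((univ.filter (fun i => τ2 i = true)).card : ℝ) - N2))
      = ∑ k2 ∈ range (N2+1), (N2.choose k2 : ℝ) *
          Real.exp (EN J11 J12 J22 h1 h2 (N1+N2)
            (2*((univ.filter (fun i => τ1 i = true)).card : ℝ) - N1)
            (2*(k2:ℝ) - N2)) := fun τ1 =>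
    sum_fun_bool N2 (fun k => Real.exp (EN J11 J12 J22 h1 h2 (N1+N2)
      (2*((univ.filter (fun i => τ1 i = true)).card : ℝ) - N1) (2*(k:ℝ) - N2)))
  rw [Finset.sum_congr rfl (fun τ1 _ => step2 τ1), Finset.sum_comm]
  rw [Finset.sum_congr rfl (fun k2 _ => sum_fun_bool N1 (fun k1 => (N2.choose k2 : ℝ) *
      Real.exp (EN J11 J12 J22 h1 h2 (N1+N2) (2*(k1:ℝ) - N1) (2*(k2:ℝ) - N2))))]
  rw [Finset.sum_comm]
  exact Finset.sum_congr rfl fun k1 _ => Finset.sum_congr rfl fun k2 _ => by ring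


noncomputable def Een (J11 J12 J22 h1 h2 : ℝ) (u v : ℝ) : ℝ :=
  (J11*u^2 + 2*J12*u*v + J22*v^2)/2 + h1*u + h2*v

noncomputable def Psi (J11 J12 J22 h1 h2 : ℝ) (q : ℝ × ℝ × ℝ) : ℝ :=
  q.1 * ent q.2.1 + (1-q.1) * ent q.2.2
    + Een J11 J12 J22 h1 h2 (q.1*(2*q.2.1-1)) ((1-q.1)*(2*q.2.2-1))

lemma continuous_Psi (J11 J12 J22 h1 h2 : ℝ) : Continuous (Psi J11 J12 J22 h1 h2) := by
  unfold Psi Een ent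
  fun_prop

lemma term_bound (J11 J12 J22 h1 h2 : ℝ) (N1 N2 k1 k2 : ℕ)
    (hN1 : 1 ≤ N1) (hN2 : 1 ≤ N2) (hk1 : k1 ≤ N1) (hk2 : k2 ≤ N2) :
    |Real.log ((N1.choose k1 : ℝ) * (N2.choose k2 : ℝ) *
        Real.exp (EN J11 J12 J22 h1 h2 (N1+N2) (2*(k1:ℝ)-(N1:ℝ)) (2*(k2:ℝ)-(N2:ℝ))))
      - ((N1:ℝ)+(N2:ℝ)) * Psi J11 J12 J22 h1 h2
          ((N1:ℝ)/((N1:ℝ)+(N2:ℝ)), (k1:ℝ)/(N1:ℝ), (k2:ℝ)/(N2:ℝ))|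
      ≤ 6*(1 + Real.log ((N1:ℝ)+(N2:ℝ)+1)) := by
  have hN1R : (0:ℝ) < N1 := by exact_mod_cast hN1
  have hN2R : (0:ℝ) < N2 := by exact_mod_cast hN2
  have hNR : (0:ℝ) < (N1:ℝ)+(N2:ℝ) := by linarith
  have hc1 : (0:ℝ) < (N1.choose k1 : ℝ) := by exact_mod_cast Nat.choose_pos hk1
  have hc2 : (0:ℝ) < (N2.choose k2 : ℝ) := by exact_mod_cast Nat.choose_pos hk2
  have hlog : Real.log ((N1.choose k1 : ℝ) * (N2.choose k2 : ℝ) *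
        Real.exp (EN J11 J12 J22 h1 h2 (N1+N2) (2*(k1:ℝ)-(N1:ℝ)) (2*(k2:ℝ)-(N2:ℝ))))
      = Real.log (N1.choose k1) + Real.log (N2.choose k2)
        + EN J11 J12 J22 h1 h2 (N1+N2) (2*(k1:ℝ)-(N1:ℝ)) (2*(k2:ℝ)-(N2:ℝ)) := by
    rw [Real.log_mul (by positivity) (Real.exp_ne_zero _), Real.log_mul hc1.ne' hc2.ne',
      Real.log_exp]
  -- decompose N * Psi
  have hone : 1 - (N1:ℝ)/((N1:ℝ)+(N2:ℝ)) = (N2:ℝ)/((N1:ℝ)+(N2:ℝ)) := by field_simp; ring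
  have hPsi : ((N1:ℝ)+(N2:ℝ)) * Psi J11 J12 J22 h1 h2
        ((N1:ℝ)/((N1:ℝ)+(N2:ℝ)), (k1:ℝ)/(N1:ℝ), (k2:ℝ)/(N2:ℝ))
      = (N1:ℝ) * ent ((k1:ℝ)/N1) + (N2:ℝ) * ent ((k2:ℝ)/N2)
        + EN J11 J12 J22 h1 h2 (N1+N2) (2*(k1:ℝ)-(N1:ℝ)) (2*(k2:ℝ)-(N2:ℝ)) := by
    unfold Psi
    rw [hone]
    have hu : ((N1:ℝ)/((N1:ℝ)+(N2:ℝ)))*(2*((k1:ℝ)/(N1:ℝ))-1)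
        = (2*(k1:ℝ)-(N1:ℝ))/((N1:ℝ)+(N2:ℝ)) := by field_simp
    have hv : ((N2:ℝ)/((N1:ℝ)+(N2:ℝ)))*(2*((k2:ℝ)/(N2:ℝ))-1)
        = (2*(k2:ℝ)-(N2:ℝ))/((N1:ℝ)+(N2:ℝ)) := by field_simp
    have hEen : ∀ s t : ℝ, ((N1:ℝ)+(N2:ℝ)) * Een J11 J12 J22 h1 h2
          (s/((N1:ℝ)+(N2:ℝ))) (t/((N1:ℝ)+(N2:ℝ)))
        = EN J11 J12 J22 h1 h2 (N1+N2) s t := by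
      intro s t
      unfold Een EN
      have : ((N1+N2 : ℕ):ℝ) = (N1:ℝ)+(N2:ℝ) := by push_cast; ring
      rw [this]
      field_simp
    simp only [Prod.fst, Prod.snd]
    rw [hu, hv, mul_add, mul_add, hEen]
    field_simp
  rw [hlog, hPsi]
  have b1 := abs_log_choose_sub_ent hN1 hk1
  have b2 := abs_log_choose_sub_ent hN2 hk2
  rw [abs_le] at b1 b2 ⊢
  push_cast at b1 b2 ⊢
  have m1 : Real.log ((N1:ℝ)+1) ≤ Real.log ((N1:ℝ)+(N2:ℝ)+1) :=
    Real.log_le_log (by positivity) (by linarith)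
  have m2 : Real.log ((N2:ℝ)+1) ≤ Real.log ((N1:ℝ)+(N2:ℝ)+1) :=
    Real.log_le_log (by positivity) (by linarith)
  constructor <;> linarith


end BMF

set_option maxHeartbeats 2000000 in
open BMF Finset in
/-- the thermodynamic limit of the pressure exists. -/
theorem pressure_thermodynamic_limit_exists
    (J11 J12 J22 h1 h2 α : ℝ) (hJ11 : 0 < J11) (hJ22 : 0 < J22)
    (hα : α ∈ Set.Ioo (0 : ℝ) 1) :
    ∃ p : ℝ, Filter.Tendsto
      (fun N : ℕ =>
        pressure J11 J12 J22 h1 h2 ⌊α * (N : ℝ)⌋₊ (N - ⌊α * (N : ℝ)⌋₊))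
      Filter.atTop (nhds p) := by
  obtain ⟨hα0, hα1⟩ := hα
  set Ψ := Psi J11 J12 J22 h1 h2 with hΨdef
  have hcont : Continuous Ψ := continuous_Psi J11 J12 J22 h1 h2
  -- compact domain
  set K : Set (ℝ × ℝ × ℝ) := Set.Icc ((0:ℝ),(0:ℝ),(0:ℝ)) (1,1,1) with hKdef
  have hKc : IsCompact K := isCompact_Icc
  -- uniform continuity
  have hUC : UniformContinuousOn Ψ K := hKc.uniformContinuousOn_of_continuous hcont.continuousOn
  -- maximizer of the section at α over [0,1]²
  set K2 : Set (ℝ × ℝ) := Set.Icc ((0:ℝ),(0:ℝ)) (1,1) with hK2def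
  have hK2c : IsCompact K2 := isCompact_Icc
  have hK2ne : K2.Nonempty := ⟨(0,0), by simp [hK2def]⟩
  obtain ⟨q, hqK2, hqmax⟩ := hK2c.exists_isMaxOn hK2ne
    ((hcont.comp (by fun_prop : Continuous (fun q : ℝ × ℝ => (α, q.1, q.2)))).continuousOn)
  set p : ℝ := Ψ (α, q.1, q.2) with hpdef
  refine ⟨p, ?_⟩
  rw [Metric.tendsto_atTop]
  intro ε hε
  -- uniform continuity modulus
  rw [Metric.uniformContinuousOn_iff] at hUC
  obtain ⟨δ, hδ0, hδ⟩ := hUC (ε/4) (by linarith)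
  -- eventual conditions
  have t1 : Tendsto (fun N : ℕ => α * (N:ℝ) - 1) atTop atTop := by
    apply Filter.tendsto_atTop_add_const_right
    exact (tendsto_natCast_atTop_atTop).const_mul_atTop hα0
  have t2 : Tendsto (fun N : ℕ => (1-α) * (N:ℝ)) atTop atTop :=
    (tendsto_natCast_atTop_atTop).const_mul_atTop (by linarith)
  have e1 : ∀ᶠ N : ℕ in atTop, max 2 (1/δ + 1) ≤ α * (N:ℝ) - 1 :=
    t1.eventually_ge_atTop _
  have e2 : ∀ᶠ N : ℕ in atTop, max 2 (1/δ + 1) ≤ (1-α) * (N:ℝ) :=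
    t2.eventually_ge_atTop _
  -- the log error term tends to zero
  have e3 : ∀ᶠ N : ℕ in atTop, 8*(1 + Real.log ((N:ℝ)+1)) / (N:ℝ) < ε/4 := by
    have hA : Tendsto (fun N : ℕ => Real.log ((N:ℝ)+1) / ((N:ℝ)+1)) atTop (nhds 0) := by
      have hlittle : Tendsto (fun x : ℝ => Real.log x / x) atTop (nhds 0) :=
        Real.isLittleO_log_id_atTop.tendsto_div_nhds_zero
      exact hlittle.comp (tendsto_atTop_add_const_right atTop 1 tendsto_natCast_atTop_atTop)
    have hB : Tendsto (fun N : ℕ => ((N:ℝ)+1)/(N:ℝ)) atTop (nhds 1) := by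
      have h1 : Tendsto (fun N : ℕ => 1 + 1/(N:ℝ)) atTop (nhds 1) := by
        have h0 := tendsto_one_div_atTop_nhds_zero_nat (𝕜 := ℝ)
        have h2 : Tendsto (fun _ : ℕ => (1:ℝ)) atTop (nhds 1) := tendsto_const_nhds
        simpa using h2.add h0
      refine h1.congr' ?_
      filter_upwards [eventually_ne_atTop 0] with N hN
      have : (N:ℝ) ≠ 0 := Nat.cast_ne_zero.mpr hN
      field_simp
    have hC : Tendsto (fun N : ℕ => 8/(N:ℝ)) atTop (nhds 0) := by
      have := tendsto_one_div_atTop_nhds_zero_nat (𝕜 := ℝ)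
      have h8 := this.const_mul (8:ℝ)
      simpa [div_eq_mul_inv] using h8
    have hmain : Tendsto (fun N : ℕ => 8*(1 + Real.log ((N:ℝ)+1)) / (N:ℝ)) atTop (nhds 0) := by
      have hD : Tendsto (fun N : ℕ =>
          8/(N:ℝ) + (8 * (Real.log ((N:ℝ)+1) / ((N:ℝ)+1))) * (((N:ℝ)+1)/(N:ℝ)))
          atTop (nhds (0 + (8*0)*1)) :=
        hC.add (((hA.const_mul 8).mul hB))
      rw [show (0:ℝ) + (8*0)*1 = 0 by ring] at hD
      refine hD.congr' ?_
      filter_upwards [eventually_ne_atTop 0] with N hN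
      have hN0 : (N:ℝ) ≠ 0 := Nat.cast_ne_zero.mpr hN
      have hN1 : (N:ℝ)+1 ≠ 0 := by positivity
      field_simp
    exact hmain.eventually_lt_const (by linarith)
  rw [← Filter.eventually_atTop]
  have memK : ∀ a x y : ℝ, 0 ≤ a → a ≤ 1 → 0 ≤ x → x ≤ 1 → 0 ≤ y → y ≤ 1 →
      ((a,x,y) : ℝ×ℝ×ℝ) ∈ K := by
    intro a x y h1 h2 h3 h4 h5 h6
    simp only [hKdef, Set.mem_Icc, Prod.le_def]
    exact ⟨⟨h1, h3, h5⟩, ⟨h2, h4, h6⟩⟩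
  have memK2 : ∀ x y : ℝ, 0 ≤ x → x ≤ 1 → 0 ≤ y → y ≤ 1 → ((x,y) : ℝ×ℝ) ∈ K2 := by
    intro x y h1 h2 h3 h4
    simp only [hK2def, Set.mem_Icc, Prod.le_def]
    exact ⟨⟨h1, h3⟩, ⟨h2, h4⟩⟩
  have distK : ∀ a x y a' x' y' : ℝ, dist ((a,x,y) : ℝ×ℝ×ℝ) ((a',x',y'))
      = max |a - a'| (max |x - x'| |y - y'|) := by
    intro a x y a' x' y'
    simp [Prod.dist_eq, Real.dist_eq]
  have hq1 : 0 ≤ q.1 ∧ q.1 ≤ 1 ∧ 0 ≤ q.2 ∧ q.2 ≤ 1 := by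
    simp only [hK2def, Set.mem_Icc, Prod.le_def] at hqK2
    tauto
  filter_upwards [e1, e2, e3] with N hN1cond hN2cond hlogcond
  -- basic facts about N1, N2
  set N1 : ℕ := ⌊α * (N:ℝ)⌋₊ with hN1def
  set N2 : ℕ := N - N1 with hN2def
  have hNpos : (0:ℝ) < (N:ℝ) := by
    have h2 : (2:ℝ) ≤ α * N - 1 := le_trans (le_max_left _ _) hN1cond
    nlinarith [hα1, Nat.cast_nonneg (α := ℝ) N]
  have hfl1 : (N1:ℝ) ≤ α * N := Nat.floor_le (by positivity)
  have hfl2 : α * N < (N1:ℝ) + 1 := Nat.lt_floor_add_one _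
  have hN1R2 : (2:ℝ) ≤ (N1:ℝ) := by
    have := le_trans (le_max_left _ _) hN1cond; linarith
  have hN1Rδ : 1/δ + 1 ≤ (N1:ℝ) := by
    have := le_trans (le_max_right _ _) hN1cond; linarith
  have hN1ltN : N1 < N := by
    have : (N1:ℝ) < (N:ℝ) := by nlinarith
    exact_mod_cast this
  have hN12 : N1 + N2 = N := by omega
  have hcastN : ((N1:ℝ) + (N2:ℝ)) = (N:ℝ) := by
    have : ((N1 + N2 : ℕ) : ℝ) = (N:ℝ) := by exact_mod_cast congrArg (Nat.cast : ℕ → ℝ) hN12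
    push_cast at this; linarith
  have hN2ge : max 2 (1/δ + 1) ≤ (N2:ℝ) := by
    have : (1-α) * N ≤ (N:ℝ) - (N1:ℝ) := by nlinarith
    linarith [hN2cond]
  have hN2R2 : (2:ℝ) ≤ (N2:ℝ) := le_trans (le_max_left _ _) hN2ge
  have hN2Rδ : 1/δ + 1 ≤ (N2:ℝ) := le_trans (le_max_right _ _) hN2ge
  have hN1n : 1 ≤ N1 := by exact_mod_cast le_trans (by norm_num : (1:ℝ) ≤ 2) hN1R2
  have hN2n : 1 ≤ N2 := by exact_mod_cast le_trans (by norm_num : (1:ℝ) ≤ 2) hN2R2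
  have hN1Rpos : (0:ℝ) < (N1:ℝ) := by linarith
  have hN2Rpos : (0:ℝ) < (N2:ℝ) := by linarith
  have hNge : (N1:ℝ) ≤ (N:ℝ) := by linarith
  -- inverse gaps below δ
  have hinv : ∀ M : ℝ, 0 < M → 1/δ + 1 ≤ M → 1/M < δ := by
    intro M hM h
    rw [div_lt_iff₀ hM]
    have h2 : δ * (1/δ + 1) = 1 + δ := by field_simp
    have h3 := mul_le_mul_of_nonneg_left h hδ0.le
    rw [h2] at h3
    linarith
  have hinvN : 1/(N:ℝ) < δ := hinv _ hNpos (by linarith)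
  have hinvN1 : 1/(N1:ℝ) < δ := hinv _ hN1Rpos hN1Rδ
  have hinvN2 : 1/(N2:ℝ) < δ := hinv _ hN2Rpos hN2Rδ
  -- aN and its distance to α
  have haN0 : 0 ≤ (N1:ℝ)/(N:ℝ) := by positivity
  have haN1 : (N1:ℝ)/(N:ℝ) ≤ 1 := by rw [div_le_one hNpos]; linarith
  have hdist_a : |(N1:ℝ)/(N:ℝ) - α| < δ := by
    rw [abs_lt]
    constructor
    · have h1 : α - 1/(N:ℝ) ≤ (N1:ℝ)/(N:ℝ) := by
        rw [sub_le_iff_le_add, ← add_div, le_div_iff₀ hNpos]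
        linarith
      linarith
    · have h2 : (N1:ℝ)/(N:ℝ) ≤ α := by rw [div_le_iff₀ hNpos]; linarith
      linarith [hδ0]
  -- rewrite the pressure via Z_eq
  have hcast2 : ((N1 + N2 : ℕ) : ℝ) = (N:ℝ) := by
    exact_mod_cast congrArg (Nat.cast : ℕ → ℝ) hN12
  have hp_eq : pressure J11 J12 J22 h1 h2 N1 N2
      = (1/(N:ℝ)) * Real.log (∑ k1 ∈ range (N1+1), ∑ k2 ∈ range (N2+1),
          ((N1.choose k1 : ℝ) * (N2.choose k2 : ℝ)) *
            Real.exp (EN J11 J12 J22 h1 h2 (N1+N2)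
              (2*(k1:ℝ)-(N1:ℝ)) (2*(k2:ℝ)-(N2:ℝ)))) := by
    unfold pressure
    rw [Z_eq, hcast2]
  set Z : ℝ := ∑ k1 ∈ range (N1+1), ∑ k2 ∈ range (N2+1),
      ((N1.choose k1 : ℝ) * (N2.choose k2 : ℝ)) *
        Real.exp (EN J11 J12 J22 h1 h2 (N1+N2)
          (2*(k1:ℝ)-(N1:ℝ)) (2*(k2:ℝ)-(N2:ℝ))) with hZdef
  have hlogN1 : 0 ≤ Real.log ((N:ℝ)+1) := Real.log_nonneg (by linarith)
  set E6 : ℝ := 6*(1 + Real.log ((N:ℝ)+1)) with hE6def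
  have hE6pos : 0 ≤ E6 := by positivity
  -- generic Psi comparison at grid points
  have hPsiCmp : ∀ x y : ℝ, 0 ≤ x → x ≤ 1 → 0 ≤ y → y ≤ 1 →
      ∀ x' y' : ℝ, 0 ≤ x' → x' ≤ 1 → 0 ≤ y' → y' ≤ 1 →
      |x - x'| < δ → |y - y'| < δ →
      |Ψ ((N1:ℝ)/(N:ℝ), x, y) - Ψ (α, x', y')| < ε/4 := by
    intro x y hx0 hx1 hy0 hy1 x' y' hx0' hx1' hy0' hy1' hdx hdy
    have h := hδ ((N1:ℝ)/(N:ℝ), x, y) (memK _ _ _ haN0 haN1 hx0 hx1 hy0 hy1)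
      (α, x', y') (memK _ _ _ hα0.le hα1.le hx0' hx1' hy0' hy1') ?_
    · rwa [Real.dist_eq] at h
    · rw [distK]
      apply max_lt hdist_a (max_lt hdx hdy)
  -- upper bound on each term
  have hterm_ub : ∀ k1 ∈ range (N1+1), ∀ k2 ∈ range (N2+1),
      ((N1.choose k1 : ℝ) * (N2.choose k2 : ℝ)) *
        Real.exp (EN J11 J12 J22 h1 h2 (N1+N2)
          (2*(k1:ℝ)-(N1:ℝ)) (2*(k2:ℝ)-(N2:ℝ)))
      ≤ Real.exp ((N:ℝ)*(p + ε/4) + E6) := by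
    intro k1 hk1 k2 hk2
    rw [mem_range, Nat.lt_succ_iff] at hk1 hk2
    have hb := term_bound J11 J12 J22 h1 h2 N1 N2 k1 k2 hN1n hN2n hk1 hk2
    rw [hcastN] at hb
    have hx0 : (0:ℝ) ≤ (k1:ℝ)/(N1:ℝ) := by positivity
    have hx1 : (k1:ℝ)/(N1:ℝ) ≤ 1 := by
      rw [div_le_one hN1Rpos]; exact_mod_cast hk1
    have hy0 : (0:ℝ) ≤ (k2:ℝ)/(N2:ℝ) := by positivity
    have hy1 : (k2:ℝ)/(N2:ℝ) ≤ 1 := by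
      rw [div_le_one hN2Rpos]; exact_mod_cast hk2
    have hcmp := hPsiCmp ((k1:ℝ)/(N1:ℝ)) ((k2:ℝ)/(N2:ℝ)) hx0 hx1 hy0 hy1
      ((k1:ℝ)/(N1:ℝ)) ((k2:ℝ)/(N2:ℝ)) hx0 hx1 hy0 hy1
      (by simpa using hδ0) (by simpa using hδ0)
    have hmax := hqmax (memK2 _ _ hx0 hx1 hy0 hy1)
    simp only at hmax
    -- hmax : Ψ (α, k1/N1, k2/N2) ≤ Ψ (α, q.1, q.2) = p
    have hPsile : Ψ ((N1:ℝ)/(N:ℝ), (k1:ℝ)/(N1:ℝ), (k2:ℝ)/(N2:ℝ)) ≤ p + ε/4 := by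
      rw [abs_lt] at hcmp
      calc Ψ ((N1:ℝ)/(N:ℝ), (k1:ℝ)/(N1:ℝ), (k2:ℝ)/(N2:ℝ))
          ≤ Ψ (α, (k1:ℝ)/(N1:ℝ), (k2:ℝ)/(N2:ℝ)) + ε/4 := by linarith [hcmp.2]
      _ ≤ p + ε/4 := by
          have : Ψ (α, (k1:ℝ)/(N1:ℝ), (k2:ℝ)/(N2:ℝ)) ≤ p := hmax
          linarith
    have hpos : (0:ℝ) < ((N1.choose k1 : ℝ) * (N2.choose k2 : ℝ)) *
        Real.exp (EN J11 J12 J22 h1 h2 (N1+N2) (2*(k1:ℝ)-(N1:ℝ)) (2*(k2:ℝ)-(N2:ℝ))) := by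
      have c1 : (0:ℝ) < (N1.choose k1 : ℝ) := by exact_mod_cast Nat.choose_pos hk1
      have c2 : (0:ℝ) < (N2.choose k2 : ℝ) := by exact_mod_cast Nat.choose_pos hk2
      positivity
    rw [← Real.exp_log hpos]
    apply Real.exp_le_exp.mpr
    rw [abs_le] at hb
    have hmul : ((N:ℝ)) * Ψ ((N1:ℝ)/(N:ℝ), (k1:ℝ)/(N1:ℝ), (k2:ℝ)/(N2:ℝ))
        ≤ (N:ℝ) * (p + ε/4) := mul_le_mul_of_nonneg_left hPsile hNpos.le
    rw [hE6def]
    linarith [hb.2, hmul]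
  -- upper bound for Z
  have hZ_ub : Z ≤ ((N1:ℝ)+1) * (((N2:ℝ)+1) * Real.exp ((N:ℝ)*(p + ε/4) + E6)) := by
    rw [hZdef]
    calc ∑ k1 ∈ range (N1+1), ∑ k2 ∈ range (N2+1),
        ((N1.choose k1 : ℝ) * (N2.choose k2 : ℝ)) *
          Real.exp (EN J11 J12 J22 h1 h2 (N1+N2)
            (2*(k1:ℝ)-(N1:ℝ)) (2*(k2:ℝ)-(N2:ℝ)))
        ≤ ∑ k1 ∈ range (N1+1), ((N2:ℝ)+1) * Real.exp ((N:ℝ)*(p + ε/4) + E6) := by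
          apply Finset.sum_le_sum
          intro k1 hk1
          calc ∑ k2 ∈ range (N2+1), ((N1.choose k1 : ℝ) * (N2.choose k2 : ℝ)) *
              Real.exp (EN J11 J12 J22 h1 h2 (N1+N2)
                (2*(k1:ℝ)-(N1:ℝ)) (2*(k2:ℝ)-(N2:ℝ)))
              ≤ (range (N2+1)).card • Real.exp ((N:ℝ)*(p + ε/4) + E6) :=
                Finset.sum_le_card_nsmul _ _ _ (fun k2 hk2 => hterm_ub k1 hk1 k2 hk2)
          _ = ((N2:ℝ)+1) * Real.exp ((N:ℝ)*(p + ε/4) + E6) := by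
                rw [Finset.card_range, nsmul_eq_mul]; push_cast; ring
    _ = ((N1:ℝ)+1) * (((N2:ℝ)+1) * Real.exp ((N:ℝ)*(p + ε/4) + E6)) := by
          rw [Finset.sum_const, Finset.card_range, nsmul_eq_mul]; push_cast; ring
  -- lower bound: pick the grid point near the maximizer
  set k1s : ℕ := ⌊q.1 * (N1:ℝ)⌋₊ with hk1sdef
  set k2s : ℕ := ⌊q.2 * (N2:ℝ)⌋₊ with hk2sdef
  have hk1s_le : k1s ≤ N1 := by
    have h := Nat.floor_le_floor (R := ℝ)
      (mul_le_of_le_one_left (Nat.cast_nonneg N1) hq1.2.1)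
    rwa [Nat.floor_natCast] at h
  have hk2s_le : k2s ≤ N2 := by
    have h := Nat.floor_le_floor (R := ℝ)
      (mul_le_of_le_one_left (Nat.cast_nonneg N2) hq1.2.2.2)
    rwa [Nat.floor_natCast] at h
  have hfl3 : (k1s:ℝ) ≤ q.1 * N1 := Nat.floor_le (mul_nonneg hq1.1 (Nat.cast_nonneg N1))
  have hfl4 : q.1 * N1 < (k1s:ℝ) + 1 := Nat.lt_floor_add_one _
  have hfl5 : (k2s:ℝ) ≤ q.2 * N2 := Nat.floor_le (mul_nonneg hq1.2.2.1 (Nat.cast_nonneg N2))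
  have hfl6 : q.2 * N2 < (k2s:ℝ) + 1 := Nat.lt_floor_add_one _
  have hxs0 : (0:ℝ) ≤ (k1s:ℝ)/(N1:ℝ) := by positivity
  have hxs1 : (k1s:ℝ)/(N1:ℝ) ≤ 1 := by rw [div_le_one hN1Rpos]; exact_mod_cast hk1s_le
  have hys0 : (0:ℝ) ≤ (k2s:ℝ)/(N2:ℝ) := by positivity
  have hys1 : (k2s:ℝ)/(N2:ℝ) ≤ 1 := by rw [div_le_one hN2Rpos]; exact_mod_cast hk2s_le
  have hdx : |(k1s:ℝ)/(N1:ℝ) - q.1| < δ := by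
    rw [abs_lt]
    constructor
    · have : q.1 - 1/(N1:ℝ) ≤ (k1s:ℝ)/(N1:ℝ) := by
        rw [sub_le_iff_le_add, ← add_div, le_div_iff₀ hN1Rpos]
        nlinarith
      linarith
    · have : (k1s:ℝ)/(N1:ℝ) ≤ q.1 := by rw [div_le_iff₀ hN1Rpos]; nlinarith
      linarith [hδ0]
  have hdy : |(k2s:ℝ)/(N2:ℝ) - q.2| < δ := by
    rw [abs_lt]
    constructor
    · have : q.2 - 1/(N2:ℝ) ≤ (k2s:ℝ)/(N2:ℝ) := by
        rw [sub_le_iff_le_add, ← add_div, le_div_iff₀ hN2Rpos]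
        nlinarith
      linarith
    · have : (k2s:ℝ)/(N2:ℝ) ≤ q.2 := by rw [div_le_iff₀ hN2Rpos]; nlinarith
      linarith [hδ0]
  have hterm_lb : Real.exp ((N:ℝ)*(p - ε/4) - E6)
      ≤ ((N1.choose k1s : ℝ) * (N2.choose k2s : ℝ)) *
        Real.exp (EN J11 J12 J22 h1 h2 (N1+N2)
          (2*(k1s:ℝ)-(N1:ℝ)) (2*(k2s:ℝ)-(N2:ℝ))) := by
    have hb := term_bound J11 J12 J22 h1 h2 N1 N2 k1s k2s hN1n hN2n hk1s_le hk2s_le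
    rw [hcastN] at hb
    have hcmp := hPsiCmp ((k1s:ℝ)/(N1:ℝ)) ((k2s:ℝ)/(N2:ℝ)) hxs0 hxs1 hys0 hys1
      q.1 q.2 hq1.1 hq1.2.1 hq1.2.2.1 hq1.2.2.2 hdx hdy
    have hpos : (0:ℝ) < ((N1.choose k1s : ℝ) * (N2.choose k2s : ℝ)) *
        Real.exp (EN J11 J12 J22 h1 h2 (N1+N2) (2*(k1s:ℝ)-(N1:ℝ)) (2*(k2s:ℝ)-(N2:ℝ))) := by
      have c1 : (0:ℝ) < (N1.choose k1s : ℝ) := by exact_mod_cast Nat.choose_pos hk1s_le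
      have c2 : (0:ℝ) < (N2.choose k2s : ℝ) := by exact_mod_cast Nat.choose_pos hk2s_le
      positivity
    rw [← Real.exp_log hpos]
    apply Real.exp_le_exp.mpr
    rw [abs_le] at hb
    rw [abs_lt] at hcmp
    have hPsige : p - ε/4 ≤ Ψ ((N1:ℝ)/(N:ℝ), (k1s:ℝ)/(N1:ℝ), (k2s:ℝ)/(N2:ℝ)) := by
      have : Ψ (α, q.1, q.2) = p := rfl
      linarith [hcmp.1]
    have hmul : (N:ℝ) * (p - ε/4) ≤ (N:ℝ) * Ψ ((N1:ℝ)/(N:ℝ), (k1s:ℝ)/(N1:ℝ), (k2s:ℝ)/(N2:ℝ)) :=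
      mul_le_mul_of_nonneg_left hPsige hNpos.le
    rw [hE6def]
    linarith [hb.1, hmul]
  have hZ_lb : Real.exp ((N:ℝ)*(p - ε/4) - E6) ≤ Z := by
    rw [hZdef]
    have hnonneg : ∀ k1 ∈ range (N1+1), (0:ℝ) ≤ ∑ k2 ∈ range (N2+1),
        ((N1.choose k1 : ℝ) * (N2.choose k2 : ℝ)) *
          Real.exp (EN J11 J12 J22 h1 h2 (N1+N2)
            (2*(k1:ℝ)-(N1:ℝ)) (2*(k2:ℝ)-(N2:ℝ))) := by
      intro k1 _
      apply Finset.sum_nonneg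
      intro k2 _
      positivity
    have hA : ∑ k2 ∈ range (N2+1),
        ((N1.choose k1s : ℝ) * (N2.choose k2 : ℝ)) *
          Real.exp (EN J11 J12 J22 h1 h2 (N1+N2)
            (2*(k1s:ℝ)-(N1:ℝ)) (2*(k2:ℝ)-(N2:ℝ)))
        ≤ ∑ k1 ∈ range (N1+1), ∑ k2 ∈ range (N2+1),
        ((N1.choose k1 : ℝ) * (N2.choose k2 : ℝ)) *
          Real.exp (EN J11 J12 J22 h1 h2 (N1+N2)
            (2*(k1:ℝ)-(N1:ℝ)) (2*(k2:ℝ)-(N2:ℝ))) :=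
      Finset.single_le_sum hnonneg (mem_range.mpr (Nat.lt_succ_of_le hk1s_le))
    have hB : ((N1.choose k1s : ℝ) * (N2.choose k2s : ℝ)) *
          Real.exp (EN J11 J12 J22 h1 h2 (N1+N2)
            (2*(k1s:ℝ)-(N1:ℝ)) (2*(k2s:ℝ)-(N2:ℝ)))
        ≤ ∑ k2 ∈ range (N2+1),
        ((N1.choose k1s : ℝ) * (N2.choose k2 : ℝ)) *
          Real.exp (EN J11 J12 J22 h1 h2 (N1+N2)
            (2*(k1s:ℝ)-(N1:ℝ)) (2*(k2:ℝ)-(N2:ℝ))) :=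
      Finset.single_le_sum (f := fun k2 : ℕ => ((N1.choose k1s : ℝ) * (N2.choose k2 : ℝ)) *
          Real.exp (EN J11 J12 J22 h1 h2 (N1+N2) (2*(k1s:ℝ)-(N1:ℝ)) (2*(k2:ℝ)-(N2:ℝ))))
        (fun k2 _ => by positivity)
        (mem_range.mpr (Nat.lt_succ_of_le hk2s_le))
    linarith [hterm_lb]
  -- conclude
  have hZpos : (0:ℝ) < Z := lt_of_lt_of_le (Real.exp_pos _) hZ_lb
  have hlogZ_lb : (N:ℝ)*(p - ε/4) - E6 ≤ Real.log Z := by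
    have := Real.log_le_log (Real.exp_pos _) hZ_lb
    rwa [Real.log_exp] at this
  have hlogZ_ub : Real.log Z ≤ 2*Real.log ((N:ℝ)+1) + ((N:ℝ)*(p + ε/4) + E6) := by
    have h1 := Real.log_le_log hZpos hZ_ub
    rw [Real.log_mul (by positivity) (by positivity),
      Real.log_mul (by positivity) (Real.exp_ne_zero _), Real.log_exp] at h1
    have h2 : Real.log ((N1:ℝ)+1) ≤ Real.log ((N:ℝ)+1) :=
      Real.log_le_log (by positivity) (by linarith)
    have h3 : Real.log ((N2:ℝ)+1) ≤ Real.log ((N:ℝ)+1) :=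
      Real.log_le_log (by positivity) (by linarith)
    linarith
  rw [hp_eq, Real.dist_eq, abs_lt]
  have hEbound : 2*Real.log ((N:ℝ)+1) + E6 ≤ 8*(1 + Real.log ((N:ℝ)+1)) := by
    rw [hE6def]; linarith
  have hdivcmp : (2*Real.log ((N:ℝ)+1) + E6)/(N:ℝ) ≤ 8*(1 + Real.log ((N:ℝ)+1))/(N:ℝ) :=
    (div_le_div_iff_of_pos_right hNpos).mpr hEbound
  have hE8 : E6 ≤ 8*(1 + Real.log ((N:ℝ)+1)) := by rw [hE6def]; linarith
  have hdivcmp2 : E6/(N:ℝ) ≤ 8*(1 + Real.log ((N:ℝ)+1))/(N:ℝ) :=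
    (div_le_div_iff_of_pos_right hNpos).mpr hE8
  have hup : (1/(N:ℝ)) * Real.log Z < p + ε/2 := by
    have hu1 : (1/(N:ℝ)) * Real.log Z
        ≤ (1/(N:ℝ)) * ((N:ℝ)*(p + ε/4) + (2*Real.log ((N:ℝ)+1) + E6)) := by
      apply mul_le_mul_of_nonneg_left _ (by positivity)
      linarith
    have hu2 : (1/(N:ℝ)) * ((N:ℝ)*(p + ε/4) + (2*Real.log ((N:ℝ)+1) + E6))
        = p + ε/4 + (2*Real.log ((N:ℝ)+1) + E6)/(N:ℝ) := by
      field_simp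
    linarith [hlogcond]
  have hdown : p - ε/2 < (1/(N:ℝ)) * Real.log Z := by
    have hd1 : (1/(N:ℝ)) * ((N:ℝ)*(p - ε/4) - E6) ≤ (1/(N:ℝ)) * Real.log Z :=
      mul_le_mul_of_nonneg_left hlogZ_lb (by positivity)
    have hd2 : (1/(N:ℝ)) * ((N:ℝ)*(p - ε/4) - E6)
        = p - ε/4 - E6/(N:ℝ) := by
      field_simp
    linarith [hlogcond]
  constructor <;> linarith
end

section
/- Upper bound for the pressure: limsup_{N→∞} p_N ≤ sup_{(μ1,μ2) ∈ [−1,1]²} p_UP(μ1, μ2). -/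
open Real Filter

/-- The upper-bound variational functional `p_UP`. -/
noncomputable def pUP (J11 J12 J22 h1 h2 α μ1 μ2 : ℝ) : ℝ :=
  Real.log 2
    - (1 / 2) * (J11 * α ^ 2 * μ1 ^ 2 + 2 * J12 * α * (1 - α) * μ1 * μ2
        + J22 * (1 - α) ^ 2 * μ2 ^ 2)
    + α * Real.log (Real.cosh (J11 * α * μ1 + J12 * (1 - α) * μ2 + h1))
    + (1 - α) * Real.log (Real.cosh (J12 * α * μ1 + J22 * (1 - α) * μ2 + h2))


lemma abs_spin (b : Bool) : |spin b| = 1 := by cases b <;> simp [spin]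

/-- log ∘ cosh -/
noncomputable def lc (x : ℝ) : ℝ := Real.log (Real.cosh x)

lemma lc_nonneg (x : ℝ) : 0 ≤ lc x := Real.log_nonneg (Real.one_le_cosh x)

lemma lc_le_abs (x : ℝ) : lc x ≤ |x| := by
  rw [lc, ← Real.log_exp |x|]
  have h1 : Real.exp x ≤ Real.exp |x| := Real.exp_le_exp.2 (le_abs_self x)
  have h2 : Real.exp (-x) ≤ Real.exp |x| := Real.exp_le_exp.2 (neg_le_abs x)
  have h3 : Real.cosh x ≤ Real.exp |x| := by rw [Real.cosh_eq]; linarith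
  exact Real.log_le_log (Real.cosh_pos x) h3

lemma lc_lip (x y : ℝ) : |lc x - lc y| ≤ |x - y| := by
  have hlip : LipschitzWith 1 lc := by
    apply lipschitzWith_of_nnnorm_deriv_le
    · intro x
      exact ((Real.hasDerivAt_cosh x).log (Real.cosh_pos x).ne').differentiableAt
    · intro x
      have hd : HasDerivAt lc (Real.sinh x / Real.cosh x) x :=
        (Real.hasDerivAt_cosh x).log (Real.cosh_pos x).ne'
      rw [hd.deriv, ← NNReal.coe_le_coe, coe_nnnorm, NNReal.coe_one, Real.norm_eq_abs,
        abs_div, abs_of_pos (Real.cosh_pos x), div_le_one (Real.cosh_pos x), Real.abs_sinh]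
      calc Real.sinh |x| ≤ Real.cosh |x| := (Real.sinh_lt_cosh (x := |x|)).le
        _ = Real.cosh x := Real.cosh_abs x
  have := hlip.dist_le_mul x y
  simpa [Real.dist_eq] using this

private lemma sum_pi_bool {n : ℕ} (f : Fin n → Bool → ℝ) :
    ∑ σ : Fin n → Bool, ∏ i, f i (σ i) = ∏ i, (f i true + f i false) := by
  rw [← Fintype.prod_sum]
  exact Finset.prod_congr rfl fun i _ => by simp

lemma card_filter_lt (N1 N2 : ℕ) :
    (Finset.univ.filter (fun i : Fin (N1 + N2) => (i : ℕ) < N1)).card = N1 := by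
  rw [Finset.card_filter]
  rw [Fin.sum_univ_eq_sum_range (fun k => if k < N1 then (1 : ℕ) else 0)]
  rw [← Finset.sum_filter]
  have h : (Finset.range (N1 + N2)).filter (fun k => k < N1) = Finset.range N1 := by
    ext k; simp only [Finset.mem_filter, Finset.mem_range]; omega
  simp [h]

lemma card_filter_ge (N1 N2 : ℕ) :
    (Finset.univ.filter (fun i : Fin (N1 + N2) => ¬ (i : ℕ) < N1)).card = N2 := by
  have h := Finset.card_filter_add_card_filter_not
    (s := (Finset.univ : Finset (Fin (N1 + N2)))) (p := fun i => (i : ℕ) < N1)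
  rw [card_filter_lt] at h
  simp only [Finset.card_univ, Fintype.card_fin] at h
  omega

/-- block magnetization sums -/
noncomputable def Sa (N1 N2 : ℕ) (σ : Fin (N1 + N2) → Bool) : ℝ :=
  ∑ i : Fin (N1 + N2), if (i : ℕ) < N1 then spin (σ i) else 0

noncomputable def Sb (N1 N2 : ℕ) (σ : Fin (N1 + N2) → Bool) : ℝ :=
  ∑ i : Fin (N1 + N2), if N1 ≤ (i : ℕ) then spin (σ i) else 0

lemma neg_ham_eq (J11 J12 J22 h1 h2 : ℝ) (N1 N2 : ℕ) (σ : Fin (N1 + N2) → Bool) :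
    -(ham J11 J12 J22 h1 h2 N1 N2 σ) =
      (1 / (2 * ((N1 + N2 : ℕ) : ℝ))) *
        (J11 * (Sa N1 N2 σ * Sa N1 N2 σ) + 2 * J12 * (Sa N1 N2 σ * Sb N1 N2 σ)
          + J22 * (Sb N1 N2 σ * Sb N1 N2 σ))
      + h1 * Sa N1 N2 σ + h2 * Sb N1 N2 σ := by
  have key : ∀ (P Q : ℕ → Prop) (_ : DecidablePred P) (_ : DecidablePred Q),
      (∑ i : Fin (N1 + N2), ∑ j : Fin (N1 + N2),
          if P (i : ℕ) ∧ Q (j : ℕ) then spin (σ i) * spin (σ j) else 0)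
        = (∑ i : Fin (N1 + N2), if P (i : ℕ) then spin (σ i) else 0)
          * (∑ j : Fin (N1 + N2), if Q (j : ℕ) then spin (σ j) else 0) := by
    intro P Q _ _
    rw [Finset.sum_mul_sum]
    refine Finset.sum_congr rfl fun i _ => Finset.sum_congr rfl fun j _ => ?_
    by_cases hP : P (i : ℕ) <;> by_cases hQ : Q (j : ℕ) <;> simp [hP, hQ]
  have k1 := key (fun k => k < N1) (fun k => k < N1) (by infer_instance) (by infer_instance)
  have k2 := key (fun k => k < N1) (fun k => N1 ≤ k) (by infer_instance) (by infer_instance)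
  have k3 := key (fun k => N1 ≤ k) (fun k => N1 ≤ k) (by infer_instance) (by infer_instance)
  simp only [ham, Sa, Sb]
  simp only at k1 k2 k3
  rw [k1, k2, k3]
  ring

/-- integer block sums -/
def Saz (N1 N2 : ℕ) (σ : Fin (N1 + N2) → Bool) : ℤ :=
  ∑ i : Fin (N1 + N2), if (i : ℕ) < N1 then (if σ i then 1 else -1) else 0

def Sbz (N1 N2 : ℕ) (σ : Fin (N1 + N2) → Bool) : ℤ :=
  ∑ i : Fin (N1 + N2), if N1 ≤ (i : ℕ) then (if σ i then 1 else -1) else 0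

lemma Sa_eq (N1 N2 : ℕ) (σ : Fin (N1 + N2) → Bool) :
    Sa N1 N2 σ = ((Saz N1 N2 σ : ℤ) : ℝ) := by
  rw [Sa, Saz]
  push_cast
  refine Finset.sum_congr rfl fun i _ => ?_
  by_cases h : (i : ℕ) < N1 <;> by_cases hb : σ i <;> simp [h, hb, spin]

lemma Sb_eq (N1 N2 : ℕ) (σ : Fin (N1 + N2) → Bool) :
    Sb N1 N2 σ = ((Sbz N1 N2 σ : ℤ) : ℝ) := by
  rw [Sb, Sbz]
  push_cast
  refine Finset.sum_congr rfl fun i _ => ?_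
  by_cases h : N1 ≤ (i : ℕ) <;> by_cases hb : σ i <;> simp [h, hb, spin]

lemma abs_Saz_le (N1 N2 : ℕ) (σ : Fin (N1 + N2) → Bool) :
    |Saz N1 N2 σ| ≤ (N1 : ℤ) := by
  calc |Saz N1 N2 σ| ≤ ∑ i : Fin (N1 + N2),
        |if (i : ℕ) < N1 then (if σ i then (1:ℤ) else -1) else 0| :=
        Finset.abs_sum_le_sum_abs _ _
    _ = ∑ i : Fin (N1 + N2), (if (i : ℕ) < N1 then (1:ℤ) else 0) := by
        refine Finset.sum_congr rfl fun i _ => ?_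
        by_cases h : (i : ℕ) < N1 <;> by_cases hb : σ i <;> simp [h, hb]
    _ = (N1 : ℤ) := by
        rw [Finset.sum_ite, Finset.sum_const, Finset.sum_const, card_filter_lt]
        simp
  
lemma abs_Sbz_le (N1 N2 : ℕ) (σ : Fin (N1 + N2) → Bool) :
    |Sbz N1 N2 σ| ≤ (N2 : ℤ) := by
  calc |Sbz N1 N2 σ| ≤ ∑ i : Fin (N1 + N2),
        |if N1 ≤ (i : ℕ) then (if σ i then (1:ℤ) else -1) else 0| :=
        Finset.abs_sum_le_sum_abs _ _
    _ = ∑ i : Fin (N1 + N2), (if N1 ≤ (i : ℕ) then (1:ℤ) else 0) := by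
        refine Finset.sum_congr rfl fun i _ => ?_
        by_cases h : N1 ≤ (i : ℕ) <;> by_cases hb : σ i <;> simp [h, hb]
    _ = (N2 : ℤ) := by
        have : ∀ i : Fin (N1 + N2), (if N1 ≤ (i:ℕ) then (1:ℤ) else 0)
            = (if ¬ (i:ℕ) < N1 then (1:ℤ) else 0) := by
          intro i; by_cases h : (i:ℕ) < N1 <;> simp [h, Nat.not_lt.2, not_lt.2]
        simp_rw [this]
        rw [Finset.sum_ite, Finset.sum_const, Finset.sum_const, card_filter_ge]
        simp

lemma sum_exp_lin (N1 N2 : ℕ) (a b : ℝ) :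
    ∑ σ : Fin (N1 + N2) → Bool, Real.exp (a * Sa N1 N2 σ + b * Sb N1 N2 σ)
      = (2 * Real.cosh a) ^ N1 * (2 * Real.cosh b) ^ N2 := by
  have h1 : ∀ σ : Fin (N1 + N2) → Bool, a * Sa N1 N2 σ + b * Sb N1 N2 σ
      = ∑ i : Fin (N1 + N2), (if (i : ℕ) < N1 then a else b) * spin (σ i) := by
    intro σ
    rw [Sa, Sb, Finset.mul_sum, Finset.mul_sum, ← Finset.sum_add_distrib]
    refine Finset.sum_congr rfl fun i _ => ?_
    by_cases h : (i : ℕ) < N1 <;> simp [h, not_lt.1, Nat.not_lt.1]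
  have h2 : ∀ σ : Fin (N1 + N2) → Bool,
      Real.exp (a * Sa N1 N2 σ + b * Sb N1 N2 σ)
      = ∏ i : Fin (N1 + N2), Real.exp ((if (i : ℕ) < N1 then a else b) * spin (σ i)) := by
    intro σ; rw [h1, Real.exp_sum]
  simp_rw [h2]
  rw [sum_pi_bool (fun i s => Real.exp ((if (i : ℕ) < N1 then a else b) * spin s))]
  have h3 : ∀ i : Fin (N1 + N2),
      Real.exp ((if (i : ℕ) < N1 then a else b) * spin true)
        + Real.exp ((if (i : ℕ) < N1 then a else b) * spin false)
      = if (i : ℕ) < N1 then 2 * Real.cosh a else 2 * Real.cosh b := by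
    intro i
    by_cases h : (i : ℕ) < N1 <;> simp [h, spin, Real.cosh_eq] <;> ring
  simp_rw [h3]
  rw [Finset.prod_ite, Finset.prod_const, Finset.prod_const, card_filter_lt, card_filter_ge]

-- linearization identity: algebra only
lemma lin_identity (J11 J12 J22 h1 h2 : ℝ) (n1 n2 k1 k2 : ℝ) (hn1 : 0 < n1) (hn2 : 0 < n2) :
    (1 / (2 * (n1 + n2))) * (J11 * (k1 * k1) + 2 * J12 * (k1 * k2) + J22 * (k2 * k2))
        + h1 * k1 + h2 * k2
      = (J11 * (n1 / (n1 + n2)) * (k1 / n1) + J12 * (1 - n1 / (n1 + n2)) * (k2 / n2) + h1) * k1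
        + (J12 * (n1 / (n1 + n2)) * (k1 / n1) + J22 * (1 - n1 / (n1 + n2)) * (k2 / n2) + h2) * k2
        - (n1 + n2) * ((1 / 2) * (J11 * (n1 / (n1 + n2)) ^ 2 * (k1 / n1) ^ 2
            + 2 * J12 * (n1 / (n1 + n2)) * (1 - n1 / (n1 + n2)) * (k1 / n1) * (k2 / n2)
            + J22 * (1 - n1 / (n1 + n2)) ^ 2 * (k2 / n2) ^ 2)) := by
  have hn : 0 < n1 + n2 := by linarith
  field_simp
  ring

-- exponent assembly
lemma exp_assembly (J11 J12 J22 h1 h2 : ℝ) (N1 N2 : ℕ) (hN1 : 0 < N1) (hN2 : 0 < N2)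
    (μ1 μ2 : ℝ) :
    (2 * Real.cosh (J11 * ((N1:ℝ) / ((N1:ℝ) + N2)) * μ1
        + J12 * (1 - (N1:ℝ) / ((N1:ℝ) + N2)) * μ2 + h1)) ^ N1
      * (2 * Real.cosh (J12 * ((N1:ℝ) / ((N1:ℝ) + N2)) * μ1
        + J22 * (1 - (N1:ℝ) / ((N1:ℝ) + N2)) * μ2 + h2)) ^ N2
      * Real.exp (-(((N1:ℝ) + N2) * ((1 / 2) * (J11 * ((N1:ℝ) / ((N1:ℝ) + N2)) ^ 2 * μ1 ^ 2
            + 2 * J12 * ((N1:ℝ) / ((N1:ℝ) + N2)) * (1 - (N1:ℝ) / ((N1:ℝ) + N2)) * μ1 * μ2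
            + J22 * (1 - (N1:ℝ) / ((N1:ℝ) + N2)) ^ 2 * μ2 ^ 2))))
      = Real.exp (((N1:ℝ) + N2)
          * pUP J11 J12 J22 h1 h2 ((N1:ℝ) / ((N1:ℝ) + N2)) μ1 μ2) := by
  have hn : (0:ℝ) < (N1:ℝ) + N2 := by positivity
  set α' : ℝ := (N1:ℝ) / ((N1:ℝ) + N2) with hα'
  set A := J11 * α' * μ1 + J12 * (1 - α') * μ2 + h1 with hA
  set B := J12 * α' * μ1 + J22 * (1 - α') * μ2 + h2 with hB
  have hcA : (0:ℝ) < 2 * Real.cosh A := by positivity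
  have hcB : (0:ℝ) < 2 * Real.cosh B := by positivity
  have e1 : (2 * Real.cosh A) ^ N1 = Real.exp ((N1:ℝ) * Real.log (2 * Real.cosh A)) := by
    rw [← Real.exp_log hcA, ← Real.exp_nat_mul, Real.log_exp]
  have e2 : (2 * Real.cosh B) ^ N2 = Real.exp ((N2:ℝ) * Real.log (2 * Real.cosh B)) := by
    rw [← Real.exp_log hcB, ← Real.exp_nat_mul, Real.log_exp]
  rw [e1, e2, ← Real.exp_add, ← Real.exp_add]
  congr 1
  rw [Real.log_mul (by norm_num) (Real.cosh_pos A).ne',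
    Real.log_mul (by norm_num) (Real.cosh_pos B).ne']
  have hα1 : ((N1:ℝ) + N2) * α' = (N1:ℝ) := by rw [hα']; field_simp
  have hα2 : ((N1:ℝ) + N2) * (1 - α') = (N2:ℝ) := by rw [hα']; field_simp; ring
  simp only [pUP]
  linear_combination (-(Real.log (Real.cosh A))) * hα1 - Real.log (Real.cosh B) * hα2


lemma lc_def (x : ℝ) : Real.log (Real.cosh x) = lc x := rfl

lemma Z_pos (J11 J12 J22 h1 h2 : ℝ) (N1 N2 : ℕ) :
    0 < ∑ σ : Fin (N1 + N2) → Bool, Real.exp (-(ham J11 J12 J22 h1 h2 N1 N2 σ)) :=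
  Finset.sum_pos (fun σ _ => Real.exp_pos _) ⟨fun _ => true, Finset.mem_univ _⟩

lemma fiber_sum_le (J11 J12 J22 h1 h2 : ℝ) (N1 N2 : ℕ) (hN1 : 0 < N1) (hN2 : 0 < N2)
    (v : ℤ × ℤ) (hk1 : |v.1| ≤ (N1 : ℤ)) (hk2 : |v.2| ≤ (N2 : ℤ)) (E : ℝ)
    (hkey : ∀ μ1 μ2 : ℝ, |μ1| ≤ 1 → |μ2| ≤ 1 →
      ((N1:ℝ) + N2) * pUP J11 J12 J22 h1 h2 ((N1:ℝ) / ((N1:ℝ) + N2)) μ1 μ2 ≤ E) :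
    ∑ σ ∈ Finset.univ.filter (fun σ : Fin (N1 + N2) → Bool =>
        (Saz N1 N2 σ, Sbz N1 N2 σ) = v),
      Real.exp (-(ham J11 J12 J22 h1 h2 N1 N2 σ)) ≤ Real.exp E := by
  have hn1 : (0:ℝ) < (N1:ℝ) := by exact_mod_cast hN1
  have hn2 : (0:ℝ) < (N2:ℝ) := by exact_mod_cast hN2
  set α' : ℝ := (N1:ℝ) / ((N1:ℝ) + N2) with hα'
  set μ1 : ℝ := ((v.1 : ℤ) : ℝ) / (N1:ℝ) with hμ1
  set μ2 : ℝ := ((v.2 : ℤ) : ℝ) / (N2:ℝ) with hμ2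
  have habs1 : |μ1| ≤ 1 := by
    rw [hμ1, abs_div, abs_of_pos hn1, div_le_one hn1, ← Int.cast_abs]
    exact_mod_cast hk1
  have habs2 : |μ2| ≤ 1 := by
    rw [hμ2, abs_div, abs_of_pos hn2, div_le_one hn2, ← Int.cast_abs]
    exact_mod_cast hk2
  set A : ℝ := J11 * α' * μ1 + J12 * (1 - α') * μ2 + h1 with hA
  set B : ℝ := J12 * α' * μ1 + J22 * (1 - α') * μ2 + h2 with hB
  set C : ℝ := ((N1:ℝ) + N2) * ((1 / 2) * (J11 * α' ^ 2 * μ1 ^ 2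
      + 2 * J12 * α' * (1 - α') * μ1 * μ2 + J22 * (1 - α') ^ 2 * μ2 ^ 2)) with hC
  have hterm : ∀ σ : Fin (N1 + N2) → Bool, (Saz N1 N2 σ, Sbz N1 N2 σ) = v →
      -(ham J11 J12 J22 h1 h2 N1 N2 σ) = A * Sa N1 N2 σ + B * Sb N1 N2 σ - C := by
    intro σ he
    have e1 : Saz N1 N2 σ = v.1 := congrArg Prod.fst he
    have e2 : Sbz N1 N2 σ = v.2 := congrArg Prod.snd he
    have hSa : Sa N1 N2 σ = ((v.1 : ℤ) : ℝ) := by rw [Sa_eq, e1]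
    have hSb : Sb N1 N2 σ = ((v.2 : ℤ) : ℝ) := by rw [Sb_eq, e2]
    rw [neg_ham_eq, hSa, hSb]
    have hcast : ((N1 + N2 : ℕ) : ℝ) = (N1:ℝ) + (N2:ℝ) := by push_cast; ring
    rw [hcast, hA, hB, hC, hα', hμ1, hμ2]
    exact lin_identity J11 J12 J22 h1 h2 (N1:ℝ) (N2:ℝ) ((v.1 : ℤ) : ℝ) ((v.2 : ℤ) : ℝ) hn1 hn2
  calc ∑ σ ∈ Finset.univ.filter (fun σ : Fin (N1 + N2) → Bool =>
        (Saz N1 N2 σ, Sbz N1 N2 σ) = v),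
      Real.exp (-(ham J11 J12 J22 h1 h2 N1 N2 σ))
      = ∑ σ ∈ Finset.univ.filter (fun σ : Fin (N1 + N2) → Bool =>
          (Saz N1 N2 σ, Sbz N1 N2 σ) = v),
        Real.exp (A * Sa N1 N2 σ + B * Sb N1 N2 σ - C) := by
        refine Finset.sum_congr rfl fun σ hσ => ?_
        rw [hterm σ (Finset.mem_filter.1 hσ).2]
    _ ≤ ∑ σ : Fin (N1 + N2) → Bool, Real.exp (A * Sa N1 N2 σ + B * Sb N1 N2 σ - C) :=
        Finset.sum_le_sum_of_subset_of_nonneg (Finset.filter_subset _ _)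
          (fun _ _ _ => (Real.exp_pos _).le)
    _ = (∑ σ : Fin (N1 + N2) → Bool, Real.exp (A * Sa N1 N2 σ + B * Sb N1 N2 σ))
          * Real.exp (-C) := by
        rw [Finset.sum_mul]
        exact Finset.sum_congr rfl fun σ _ => by rw [← Real.exp_add, sub_eq_add_neg]
    _ = (2 * Real.cosh A) ^ N1 * (2 * Real.cosh B) ^ N2 * Real.exp (-C) := by
        rw [sum_exp_lin]
    _ = Real.exp (((N1:ℝ) + N2) * pUP J11 J12 J22 h1 h2 α' μ1 μ2) :=
        exp_assembly J11 J12 J22 h1 h2 N1 N2 hN1 hN2 μ1 μ2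
    _ ≤ Real.exp E := Real.exp_le_exp.2 (hkey μ1 μ2 habs1 habs2)

lemma pressure_le (J11 J12 J22 h1 h2 : ℝ) (N1 N2 : ℕ) (hN1 : 0 < N1) (hN2 : 0 < N2)
    (E : ℝ)
    (hkey : ∀ μ1 μ2 : ℝ, |μ1| ≤ 1 → |μ2| ≤ 1 →
      ((N1:ℝ) + N2) * pUP J11 J12 J22 h1 h2 ((N1:ℝ) / ((N1:ℝ) + N2)) μ1 μ2 ≤ E) :
    pressure J11 J12 J22 h1 h2 N1 N2
      ≤ (Real.log ((2 * (N1:ℝ) + 1) * (2 * (N2:ℝ) + 1)) + E) / ((N1:ℝ) + N2) := by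
  classical
  have hn : (0:ℝ) < (N1:ℝ) + N2 := by positivity
  set Z := ∑ σ : Fin (N1 + N2) → Bool, Real.exp (-(ham J11 J12 J22 h1 h2 N1 N2 σ)) with hZdef
  set T : Finset (ℤ × ℤ) :=
    Finset.image (fun σ : Fin (N1 + N2) → Bool => (Saz N1 N2 σ, Sbz N1 N2 σ)) Finset.univ
    with hT
  have grouping : Z = ∑ v ∈ T, ∑ σ ∈ Finset.univ.filter
      (fun σ : Fin (N1 + N2) → Bool => (Saz N1 N2 σ, Sbz N1 N2 σ) = v),
      Real.exp (-(ham J11 J12 J22 h1 h2 N1 N2 σ)) :=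
    (Finset.sum_fiberwise_of_maps_to
      (fun σ _ => Finset.mem_image_of_mem _ (Finset.mem_univ σ)) _).symm
  have cardT : T.card ≤ (2 * N1 + 1) * (2 * N2 + 1) := by
    have hsub : T ⊆ Finset.Icc (-(N1:ℤ)) (N1:ℤ) ×ˢ Finset.Icc (-(N2:ℤ)) (N2:ℤ) := by
      intro v hv
      obtain ⟨σ, -, hσ⟩ := Finset.mem_image.1 hv
      rw [Finset.mem_product, Finset.mem_Icc, Finset.mem_Icc, ← hσ]
      have ha := abs_le.1 (abs_Saz_le N1 N2 σ)
      have hb := abs_le.1 (abs_Sbz_le N1 N2 σ)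
      exact ⟨⟨ha.1, ha.2⟩, ⟨hb.1, hb.2⟩⟩
    have h := Finset.card_le_card hsub
    rw [Finset.card_product, Int.card_Icc, Int.card_Icc] at h
    have e1 : ((N1:ℤ) + 1 - -(N1:ℤ)).toNat = 2 * N1 + 1 := by omega
    have e2 : ((N2:ℤ) + 1 - -(N2:ℤ)).toNat = 2 * N2 + 1 := by omega
    rwa [e1, e2] at h
  have Zle : Z ≤ (2 * (N1:ℝ) + 1) * (2 * (N2:ℝ) + 1) * Real.exp E := by
    rw [grouping]
    calc ∑ v ∈ T, ∑ σ ∈ Finset.univ.filter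
          (fun σ : Fin (N1 + N2) → Bool => (Saz N1 N2 σ, Sbz N1 N2 σ) = v),
          Real.exp (-(ham J11 J12 J22 h1 h2 N1 N2 σ))
        ≤ ∑ v ∈ T, Real.exp E := by
          refine Finset.sum_le_sum fun v hv => ?_
          obtain ⟨σ0, -, hσ0⟩ := Finset.mem_image.1 hv
          have hk1 : |v.1| ≤ (N1:ℤ) := by
            rw [← congrArg Prod.fst hσ0]; exact abs_Saz_le N1 N2 σ0
          have hk2 : |v.2| ≤ (N2:ℤ) := by
            rw [← congrArg Prod.snd hσ0]; exact abs_Sbz_le N1 N2 σ0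
          exact fiber_sum_le J11 J12 J22 h1 h2 N1 N2 hN1 hN2 v hk1 hk2 E hkey
      _ = T.card * Real.exp E := by rw [Finset.sum_const, nsmul_eq_mul]
      _ ≤ ((2 * N1 + 1) * (2 * N2 + 1) : ℕ) * Real.exp E := by
          have : (T.card : ℝ) ≤ (((2 * N1 + 1) * (2 * N2 + 1) : ℕ) : ℝ) := by
            exact_mod_cast cardT
          exact mul_le_mul_of_nonneg_right this (Real.exp_pos _).le
      _ = (2 * (N1:ℝ) + 1) * (2 * (N2:ℝ) + 1) * Real.exp E := by push_cast; ring
  have hZ : 0 < Z := Z_pos J11 J12 J22 h1 h2 N1 N2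
  have hlog : Real.log Z ≤ Real.log ((2 * (N1:ℝ) + 1) * (2 * (N2:ℝ) + 1)) + E := by
    calc Real.log Z ≤ Real.log ((2 * (N1:ℝ) + 1) * (2 * (N2:ℝ) + 1) * Real.exp E) :=
          Real.log_le_log hZ Zle
      _ = Real.log ((2 * (N1:ℝ) + 1) * (2 * (N2:ℝ) + 1)) + E := by
          rw [Real.log_mul (by positivity) (Real.exp_ne_zero _), Real.log_exp]
  have hcast : ((N1 + N2 : ℕ) : ℝ) = (N1:ℝ) + (N2:ℝ) := by push_cast; ring
  rw [pressure, hcast, ← hZdef]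
  calc (1 / ((N1:ℝ) + N2)) * Real.log Z
      ≤ (1 / ((N1:ℝ) + N2)) * (Real.log ((2 * (N1:ℝ) + 1) * (2 * (N2:ℝ) + 1)) + E) := by
        exact mul_le_mul_of_nonneg_left hlog (by positivity)
    _ = (Real.log ((2 * (N1:ℝ) + 1) * (2 * (N2:ℝ) + 1)) + E) / ((N1:ℝ) + N2) := by ring

lemma pUP_lipschitz (J11 J12 J22 h1 h2 : ℝ) (a b μ1 μ2 : ℝ)
    (ha0 : 0 ≤ a) (ha1 : a ≤ 1) (hb0 : 0 ≤ b) (hb1 : b ≤ 1)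
    (hμ1 : |μ1| ≤ 1) (hμ2 : |μ2| ≤ 1) :
    pUP J11 J12 J22 h1 h2 a μ1 μ2 ≤ pUP J11 J12 J22 h1 h2 b μ1 μ2
      + (3 * |J11| + 5 * |J12| + 3 * |J22| + |h1| + |h2|) * |a - b| := by
  have habs : ∀ x y mx my : ℝ, |x| ≤ mx → |y| ≤ my → |x * y| ≤ mx * my := by
    intro x y mx my hx hy
    rw [abs_mul]
    exact mul_le_mul hx hy (abs_nonneg _) ((abs_nonneg x).trans hx)
  have htri : ∀ x y : ℝ, |x - y| ≤ |x| + |y| := fun x y => by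
    calc |x - y| = |x + -y| := by rw [sub_eq_add_neg]
      _ ≤ |x| + |-y| := abs_add_le _ _
      _ = |x| + |y| := by rw [abs_neg]
  have htri3 : ∀ x y z : ℝ, |x + y + z| ≤ |x| + |y| + |z| := fun x y z =>
    (abs_add_le _ _).trans (add_le_add_left (abs_add_le _ _) _)
  set d := |a - b| with hd
  have hd0 : 0 ≤ d := abs_nonneg _
  set A1 := J11 * a * μ1 + J12 * (1 - a) * μ2 + h1 with hA1
  set B1 := J11 * b * μ1 + J12 * (1 - b) * μ2 + h1 with hB1
  set A2 := J12 * a * μ1 + J22 * (1 - a) * μ2 + h2 with hA2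
  set B2 := J12 * b * μ1 + J22 * (1 - b) * μ2 + h2 with hB2
  have hamem : |a| ≤ 1 := abs_le.2 ⟨by linarith, ha1⟩
  have h1amem : |1 - a| ≤ 1 := abs_le.2 ⟨by linarith, by linarith⟩
  have hbmem : |b| ≤ 1 := abs_le.2 ⟨by linarith, hb1⟩
  have h1bmem : |1 - b| ≤ 1 := abs_le.2 ⟨by linarith, by linarith⟩
  -- argument bounds
  have hargA1 : |A1| ≤ |J11| + |J12| + |h1| := by
    rw [hA1]
    refine (htri3 _ _ _).trans ?_
    have e1 : |J11 * a * μ1| ≤ |J11| * 1 * 1 := habs _ _ _ _ (habs _ _ _ _ (le_refl _) hamem) hμ1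
    have e2 : |J12 * (1 - a) * μ2| ≤ |J12| * 1 * 1 :=
      habs _ _ _ _ (habs _ _ _ _ (le_refl _) h1amem) hμ2
    simp only [mul_one] at e1 e2
    linarith [le_refl |h1|]
  have hargA2 : |A2| ≤ |J12| + |J22| + |h2| := by
    rw [hA2]
    refine (htri3 _ _ _).trans ?_
    have e1 : |J12 * a * μ1| ≤ |J12| * 1 * 1 := habs _ _ _ _ (habs _ _ _ _ (le_refl _) hamem) hμ1
    have e2 : |J22 * (1 - a) * μ2| ≤ |J22| * 1 * 1 :=
      habs _ _ _ _ (habs _ _ _ _ (le_refl _) h1amem) hμ2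
    simp only [mul_one] at e1 e2
    linarith
  -- argument differences
  have hdiff1 : |A1 - B1| ≤ (|J11| + |J12|) * d := by
    have he : A1 - B1 = (J11 * μ1 - J12 * μ2) * (a - b) := by rw [hA1, hB1]; ring
    rw [he, abs_mul, ← hd]
    refine mul_le_mul_of_nonneg_right ?_ hd0
    refine (htri _ _).trans ?_
    have e1 : |J11 * μ1| ≤ |J11| * 1 := habs _ _ _ _ (le_refl _) hμ1
    have e2 : |J12 * μ2| ≤ |J12| * 1 := habs _ _ _ _ (le_refl _) hμ2
    linarith
  have hdiff2 : |A2 - B2| ≤ (|J12| + |J22|) * d := by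
    have he : A2 - B2 = (J12 * μ1 - J22 * μ2) * (a - b) := by rw [hA2, hB2]; ring
    rw [he, abs_mul, ← hd]
    refine mul_le_mul_of_nonneg_right ?_ hd0
    refine (htri _ _).trans ?_
    have e1 : |J12 * μ1| ≤ |J12| * 1 := habs _ _ _ _ (le_refl _) hμ1
    have e2 : |J22 * μ2| ≤ |J22| * 1 := habs _ _ _ _ (le_refl _) hμ2
    linarith
  have hlc1 : |lc A1 - lc B1| ≤ (|J11| + |J12|) * d := (lc_lip _ _).trans hdiff1
  have hlc2 : |lc A2 - lc B2| ≤ (|J12| + |J22|) * d := (lc_lip _ _).trans hdiff2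
  -- quadratic part
  have hsq1 : |μ1 ^ 2| ≤ 1 := by rw [abs_pow]; exact pow_le_one₀ (abs_nonneg _) hμ1
  have hsq2 : |μ2 ^ 2| ≤ 1 := by rw [abs_pow]; exact pow_le_one₀ (abs_nonneg _) hμ2
  have hq : |(J11 * a ^ 2 * μ1 ^ 2 + 2 * J12 * a * (1 - a) * μ1 * μ2
        + J22 * (1 - a) ^ 2 * μ2 ^ 2)
      - (J11 * b ^ 2 * μ1 ^ 2 + 2 * J12 * b * (1 - b) * μ1 * μ2
        + J22 * (1 - b) ^ 2 * μ2 ^ 2)|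
      ≤ (2 * |J11| + 2 * |J12| + 2 * |J22|) * d := by
    have he : (J11 * a ^ 2 * μ1 ^ 2 + 2 * J12 * a * (1 - a) * μ1 * μ2
          + J22 * (1 - a) ^ 2 * μ2 ^ 2)
        - (J11 * b ^ 2 * μ1 ^ 2 + 2 * J12 * b * (1 - b) * μ1 * μ2
          + J22 * (1 - b) ^ 2 * μ2 ^ 2)
        = (J11 * μ1 ^ 2 * (a + b) + 2 * J12 * (μ1 * μ2) * (1 - a - b)
            - J22 * μ2 ^ 2 * (2 - a - b)) * (a - b) := by ring
    rw [he, abs_mul, ← hd]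
    refine mul_le_mul_of_nonneg_right ?_ hd0
    have hab : |a + b| ≤ 2 := abs_le.2 ⟨by linarith, by linarith⟩
    have h1ab : |1 - a - b| ≤ 1 := abs_le.2 ⟨by linarith, by linarith⟩
    have h2ab : |2 - a - b| ≤ 2 := abs_le.2 ⟨by linarith, by linarith⟩
    have hμμ : |μ1 * μ2| ≤ 1 := by
      have := habs μ1 μ2 1 1 hμ1 hμ2; simpa using this
    have e1 : |J11 * μ1 ^ 2 * (a + b)| ≤ |J11| * 1 * 2 :=
      habs _ _ _ _ (habs _ _ _ _ (le_refl _) hsq1) hab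
    have e2 : |2 * J12 * (μ1 * μ2) * (1 - a - b)| ≤ 2 * |J12| * 1 * 1 := by
      refine habs _ _ _ _ (habs _ _ _ _ ?_ hμμ) h1ab
      rw [abs_mul, abs_two]
    have e3 : |J22 * μ2 ^ 2 * (2 - a - b)| ≤ |J22| * 1 * 2 :=
      habs _ _ _ _ (habs _ _ _ _ (le_refl _) hsq2) h2ab
    calc |J11 * μ1 ^ 2 * (a + b) + 2 * J12 * (μ1 * μ2) * (1 - a - b)
          - J22 * μ2 ^ 2 * (2 - a - b)|
        = |(J11 * μ1 ^ 2 * (a + b) + 2 * J12 * (μ1 * μ2) * (1 - a - b))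
            + -(J22 * μ2 ^ 2 * (2 - a - b))| := by rw [sub_eq_add_neg]
      _ ≤ |J11 * μ1 ^ 2 * (a + b) + 2 * J12 * (μ1 * μ2) * (1 - a - b)|
            + |-(J22 * μ2 ^ 2 * (2 - a - b))| := abs_add_le _ _
      _ ≤ _ := by
          rw [abs_neg]
          have := abs_add_le (J11 * μ1 ^ 2 * (a + b)) (2 * J12 * (μ1 * μ2) * (1 - a - b))
          linarith [e1, e2, e3]
  -- combine
  have hsplit : pUP J11 J12 J22 h1 h2 a μ1 μ2 - pUP J11 J12 J22 h1 h2 b μ1 μ2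
      = -(1 / 2) * ((J11 * a ^ 2 * μ1 ^ 2 + 2 * J12 * a * (1 - a) * μ1 * μ2
            + J22 * (1 - a) ^ 2 * μ2 ^ 2)
          - (J11 * b ^ 2 * μ1 ^ 2 + 2 * J12 * b * (1 - b) * μ1 * μ2
            + J22 * (1 - b) ^ 2 * μ2 ^ 2))
        + ((a - b) * lc A1 + b * (lc A1 - lc B1))
        + ((b - a) * lc A2 + (1 - b) * (lc A2 - lc B2)) := by
    simp only [pUP, lc_def, hA1, hB1, hA2, hB2]
    ring
  have hT1a : (a - b) * lc A1 ≤ d * (|J11| + |J12| + |h1|) := by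
    calc (a - b) * lc A1 ≤ |(a - b) * lc A1| := le_abs_self _
      _ ≤ d * (|J11| + |J12| + |h1|) := by
          rw [abs_mul, ← hd]
          refine mul_le_mul_of_nonneg_left ?_ hd0
          rw [abs_of_nonneg (lc_nonneg _)]
          exact (lc_le_abs _).trans hargA1
  have hT1b : b * (lc A1 - lc B1) ≤ (|J11| + |J12|) * d := by
    calc b * (lc A1 - lc B1) ≤ |b * (lc A1 - lc B1)| := le_abs_self _
      _ ≤ 1 * ((|J11| + |J12|) * d) := habs _ _ _ _ hbmem hlc1
      _ = (|J11| + |J12|) * d := by ring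
  have hT2a : (b - a) * lc A2 ≤ d * (|J12| + |J22| + |h2|) := by
    calc (b - a) * lc A2 ≤ |(b - a) * lc A2| := le_abs_self _
      _ = |(a - b) * lc A2| := by rw [← abs_neg]; congr 1; ring
      _ ≤ d * (|J12| + |J22| + |h2|) := by
          rw [abs_mul, ← hd]
          refine mul_le_mul_of_nonneg_left ?_ hd0
          rw [abs_of_nonneg (lc_nonneg _)]
          exact (lc_le_abs _).trans hargA2
  have hT2b : (1 - b) * (lc A2 - lc B2) ≤ (|J12| + |J22|) * d := by
    calc (1 - b) * (lc A2 - lc B2) ≤ |(1 - b) * (lc A2 - lc B2)| := le_abs_self _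
      _ ≤ 1 * ((|J12| + |J22|) * d) := habs _ _ _ _ h1bmem hlc2
      _ = (|J12| + |J22|) * d := by ring
  have hqq := (abs_le.1 hq).1
  clear_value d A1 B1 A2 B2
  linarith [hsplit, hT1a, hT1b, hT2a, hT2b, hqq]

lemma pressure_lower (J11 J12 J22 h1 h2 : ℝ) (N1 N2 : ℕ) (hpos : 0 < N1 + N2) :
    -((|J11| + 2 * |J12| + |J22|) / 2 + |h1| + |h2|)
      ≤ pressure J11 J12 J22 h1 h2 N1 N2 := by
  classical
  set n : ℝ := ((N1 + N2 : ℕ) : ℝ) with hn'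
  have hnpos : (0:ℝ) < n := by rw [hn']; exact_mod_cast hpos
  set C : ℝ := (|J11| + 2 * |J12| + |J22|) / 2 + |h1| + |h2| with hC
  have hham : ∀ σ : Fin (N1 + N2) → Bool, ham J11 J12 J22 h1 h2 N1 N2 σ ≤ C * n := by
    intro σ
    have hsingle : ∀ (P : ℕ → Prop) (_ : DecidablePred P),
        |∑ i : Fin (N1 + N2), if P (i : ℕ) then spin (σ i) else 0| ≤ n := by
      intro P _
      calc |∑ i : Fin (N1 + N2), if P (i : ℕ) then spin (σ i) else 0|
          ≤ ∑ i : Fin (N1 + N2), |if P (i : ℕ) then spin (σ i) else 0| :=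
            Finset.abs_sum_le_sum_abs _ _
        _ ≤ ∑ _i : Fin (N1 + N2), (1:ℝ) := by
            refine Finset.sum_le_sum fun i _ => ?_
            by_cases h : P (i : ℕ) <;> simp [h, abs_spin]
        _ = n := by
            rw [Finset.sum_const, Finset.card_univ, Fintype.card_fin,
              nsmul_eq_mul, mul_one, hn']
    have hdouble : ∀ (P Q : ℕ → Prop) (_ : DecidablePred P) (_ : DecidablePred Q),
        |∑ i : Fin (N1 + N2), ∑ j : Fin (N1 + N2),
          if P (i : ℕ) ∧ Q (j : ℕ) then spin (σ i) * spin (σ j) else 0| ≤ n * n := by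
      intro P Q _ _
      calc |∑ i : Fin (N1 + N2), ∑ j : Fin (N1 + N2),
            if P (i : ℕ) ∧ Q (j : ℕ) then spin (σ i) * spin (σ j) else 0|
          ≤ ∑ i : Fin (N1 + N2), |∑ j : Fin (N1 + N2),
            if P (i : ℕ) ∧ Q (j : ℕ) then spin (σ i) * spin (σ j) else 0| :=
            Finset.abs_sum_le_sum_abs _ _
        _ ≤ ∑ _i : Fin (N1 + N2), n := by
            refine Finset.sum_le_sum fun i _ => ?_
            calc |∑ j : Fin (N1 + N2),
                  if P (i : ℕ) ∧ Q (j : ℕ) then spin (σ i) * spin (σ j) else 0|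
                ≤ ∑ j : Fin (N1 + N2), |if P (i : ℕ) ∧ Q (j : ℕ)
                    then spin (σ i) * spin (σ j) else 0| := Finset.abs_sum_le_sum_abs _ _
              _ ≤ ∑ _j : Fin (N1 + N2), (1:ℝ) := by
                  refine Finset.sum_le_sum fun j _ => ?_
                  by_cases h : P (i : ℕ) ∧ Q (j : ℕ)
                  · rw [if_pos h, abs_mul, abs_spin, abs_spin]; norm_num
                  · simp [h]
              _ = n := by
                  rw [Finset.sum_const, Finset.card_univ, Fintype.card_fin,
                    nsmul_eq_mul, mul_one, hn']
        _ = n * n := by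
            rw [Finset.sum_const, Finset.card_univ, Fintype.card_fin, nsmul_eq_mul, hn']
    have hD1 := hdouble (fun k => k < N1) (fun k => k < N1) (by infer_instance) (by infer_instance)
    have hD2 := hdouble (fun k => k < N1) (fun k => N1 ≤ k) (by infer_instance) (by infer_instance)
    have hD3 := hdouble (fun k => N1 ≤ k) (fun k => N1 ≤ k) (by infer_instance) (by infer_instance)
    have hS1 := hsingle (fun k => k < N1) (by infer_instance)
    have hS2 := hsingle (fun k => N1 ≤ k) (by infer_instance)
    rw [ham]
    set D1 := ∑ i : Fin (N1 + N2), ∑ j : Fin (N1 + N2),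
      if (i : ℕ) < N1 ∧ (j : ℕ) < N1 then spin (σ i) * spin (σ j) else 0 with hD1'
    set D2 := ∑ i : Fin (N1 + N2), ∑ j : Fin (N1 + N2),
      if (i : ℕ) < N1 ∧ N1 ≤ (j : ℕ) then spin (σ i) * spin (σ j) else 0 with hD2'
    set D3 := ∑ i : Fin (N1 + N2), ∑ j : Fin (N1 + N2),
      if N1 ≤ (i : ℕ) ∧ N1 ≤ (j : ℕ) then spin (σ i) * spin (σ j) else 0 with hD3'
    set S1 := ∑ i : Fin (N1 + N2), if (i : ℕ) < N1 then spin (σ i) else 0 with hS1'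
    set S2 := ∑ i : Fin (N1 + N2), if N1 ≤ (i : ℕ) then spin (σ i) else 0 with hS2'
    have habs : ∀ x y mx my : ℝ, |x| ≤ mx → |y| ≤ my → |x * y| ≤ mx * my := by
      intro x y mx my hx hy
      rw [abs_mul]
      exact mul_le_mul hx hy (abs_nonneg _) ((abs_nonneg x).trans hx)
    have e1 := (abs_le.1 (habs J11 D1 |J11| (n * n) (le_refl _) hD1)).1
    have e2 := (abs_le.1 (habs J12 D2 |J12| (n * n) (le_refl _) hD2)).1
    have e3 := (abs_le.1 (habs J22 D3 |J22| (n * n) (le_refl _) hD3)).1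
    have f1 := (abs_le.1 (habs h1 S1 |h1| n (le_refl _) hS1)).1
    have f2 := (abs_le.1 (habs h2 S2 |h2| n (le_refl _) hS2)).1
    have hX : -(J11 * D1 + 2 * J12 * D2 + J22 * D3)
        ≤ (|J11| + 2 * |J12| + |J22|) * (n * n) := by linarith
    have hcast : ((N1 + N2 : ℕ) : ℝ) = n := rfl
    rw [hcast]
    have h0 : (0:ℝ) ≤ 1 / (2 * n) := by positivity
    have step1 : -(1 / (2 * n)) * (J11 * D1 + 2 * J12 * D2 + J22 * D3)
        ≤ (|J11| + 2 * |J12| + |J22|) / 2 * n := by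
      calc -(1 / (2 * n)) * (J11 * D1 + 2 * J12 * D2 + J22 * D3)
          = (1 / (2 * n)) * (-(J11 * D1 + 2 * J12 * D2 + J22 * D3)) := by ring
        _ ≤ (1 / (2 * n)) * ((|J11| + 2 * |J12| + |J22|) * (n * n)) :=
            mul_le_mul_of_nonneg_left hX h0
        _ = (|J11| + 2 * |J12| + |J22|) / 2 * n := by field_simp
    have step2 : -(h1 * S1) ≤ |h1| * n := by linarith
    have step3 : -(h2 * S2) ≤ |h2| * n := by linarith
    have hCn : C * n = (|J11| + 2 * |J12| + |J22|) / 2 * n + |h1| * n + |h2| * n := by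
      rw [hC]; ring
    linarith
  have hσ0 : Real.exp (-(C * n)) ≤ ∑ σ : Fin (N1 + N2) → Bool,
      Real.exp (-(ham J11 J12 J22 h1 h2 N1 N2 σ)) := by
    calc Real.exp (-(C * n)) ≤ Real.exp (-(ham J11 J12 J22 h1 h2 N1 N2 (fun _ => true))) :=
          Real.exp_le_exp.2 (neg_le_neg (hham _))
      _ ≤ _ := Finset.single_le_sum
          (f := fun σ : Fin (N1 + N2) → Bool => Real.exp (-(ham J11 J12 J22 h1 h2 N1 N2 σ)))
          (fun σ _ => (Real.exp_pos _).le) (Finset.mem_univ _)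
  have hlogZ : -(C * n) ≤ Real.log (∑ σ : Fin (N1 + N2) → Bool,
      Real.exp (-(ham J11 J12 J22 h1 h2 N1 N2 σ))) := by
    calc -(C * n) = Real.log (Real.exp (-(C * n))) := (Real.log_exp _).symm
      _ ≤ _ := Real.log_le_log (Real.exp_pos _) hσ0
  rw [pressure, ← hn']
  calc -C = (1 / n) * (-(C * n)) := by field_simp
    _ ≤ (1 / n) * Real.log (∑ σ : Fin (N1 + N2) → Bool,
          Real.exp (-(ham J11 J12 J22 h1 h2 N1 N2 σ))) :=
        mul_le_mul_of_nonneg_left hlogZ (by positivity)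

lemma error_tendsto (L : ℝ) :
    Tendsto (fun N : ℕ => (L + 2 * Real.log (2 * (N:ℝ) + 1)) / (N:ℝ)) atTop (nhds 0) := by
  have hy : Tendsto (fun N : ℕ => 2 * (N:ℝ) + 1) atTop atTop := by
    apply Filter.tendsto_atTop_add_const_right
    exact (tendsto_natCast_atTop_atTop).const_mul_atTop (by norm_num)
  have hlog : Tendsto (fun N : ℕ => Real.log (2 * (N:ℝ) + 1) / (N:ℝ)) atTop (nhds 0) := by
    have h0 := Real.tendsto_pow_log_div_mul_add_atTop (1/2) (-1/2) 1 (by norm_num)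
    have h1 := h0.comp hy
    have h2 : ∀ N : ℕ, 1 ≤ N → (fun x => Real.log x ^ 1 / (1/2 * x + -1/2))
        ((fun N : ℕ => 2 * (N:ℝ) + 1) N) = Real.log (2 * (N:ℝ) + 1) / (N:ℝ) := by
      intro N hN
      simp only [pow_one]
      congr 1
      ring
    refine Tendsto.congr' ?_ h1
    filter_upwards [eventually_ge_atTop 1] with N hN
    exact h2 N hN
  have hconst : Tendsto (fun N : ℕ => L / (N:ℝ)) atTop (nhds 0) :=
    tendsto_const_div_atTop_nhds_zero_nat L
  have := hconst.add (hlog.const_mul 2)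
  simp only [add_zero, mul_zero] at this
  refine Tendsto.congr (fun N => ?_) this
  ring

/-- upper bound for the limiting pressure. -/
theorem pressure_limsup_le_sup_pUP
    (J11 J12 J22 h1 h2 α : ℝ) (hJ11 : 0 < J11) (hJ22 : 0 < J22)
    (hα : α ∈ Set.Ioo (0 : ℝ) 1) :
    Filter.limsup
      (fun N : ℕ =>
        pressure J11 J12 J22 h1 h2 ⌊α * (N : ℝ)⌋₊ (N - ⌊α * (N : ℝ)⌋₊))
      Filter.atTop ≤
      sSup ((fun μ : ℝ × ℝ => pUP J11 J12 J22 h1 h2 α μ.1 μ.2) ''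
        (Set.Icc (-1 : ℝ) 1 ×ˢ Set.Icc (-1 : ℝ) 1)) := by
  obtain ⟨hα0, hα1⟩ := hα
  set G : ℝ × ℝ → ℝ := fun μ => pUP J11 J12 J22 h1 h2 α μ.1 μ.2 with hG
  set K : Set (ℝ × ℝ) := Set.Icc (-1 : ℝ) 1 ×ˢ Set.Icc (-1 : ℝ) 1 with hK
  set S : ℝ := sSup (G '' K) with hS
  have hGcont : Continuous G := by
    rw [hG]
    simp only [pUP]
    have hc : ∀ c1 c2 c3 : ℝ, Continuous fun μ : ℝ × ℝ =>
        Real.log (Real.cosh (c1 * μ.1 + c2 * μ.2 + c3)) := by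
      intro c1 c2 c3
      have harg : Continuous fun μ : ℝ × ℝ => c1 * μ.1 + c2 * μ.2 + c3 := by continuity
      exact (Real.continuous_cosh.comp harg).log fun μ => (Real.cosh_pos _).ne'
    refine Continuous.add (Continuous.add (Continuous.sub continuous_const ?_)
      (continuous_const.mul ?_)) (continuous_const.mul ?_)
    · continuity
    · exact hc (J11 * α) (J12 * (1 - α)) h1
    · exact hc (J12 * α) (J22 * (1 - α)) h2
  have hKcomp : IsCompact K := (isCompact_Icc).prod isCompact_Icc
  have hBdd : BddAbove (G '' K) := (hKcomp.image hGcont).bddAbove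
  set L : ℝ := 3 * |J11| + 5 * |J12| + 3 * |J22| + |h1| + |h2| with hL
  have hL0 : 0 ≤ L := by positivity
  set C : ℝ := (|J11| + 2 * |J12| + |J22|) / 2 + |h1| + |h2| with hCdef
  set u : ℕ → ℝ := fun N =>
    pressure J11 J12 J22 h1 h2 ⌊α * (N : ℝ)⌋₊ (N - ⌊α * (N : ℝ)⌋₊) with hu
  set v : ℕ → ℝ := fun N => S + (L + 2 * Real.log (2 * (N:ℝ) + 1)) / (N:ℝ) with hv
  have htend : Tendsto v atTop (nhds S) := by
    have := (tendsto_const_nhds (x := S) (f := atTop)).add (error_tendsto L)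
    simpa using this
  -- eventual conditions
  have tα : Tendsto (fun N : ℕ => α * (N:ℝ)) atTop atTop :=
    (tendsto_natCast_atTop_atTop).const_mul_atTop hα0
  have tβ : Tendsto (fun N : ℕ => (1 - α) * (N:ℝ)) atTop atTop :=
    (tendsto_natCast_atTop_atTop).const_mul_atTop (by linarith)
  have hev : ∀ᶠ N : ℕ in atTop, u N ≤ v N := by
    filter_upwards [tα.eventually_ge_atTop 1, tβ.eventually_ge_atTop 1,
      eventually_ge_atTop 1] with N h1N h2N hN1'
    -- setup
    set N1 : ℕ := ⌊α * (N : ℝ)⌋₊ with hN1def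
    set N2 : ℕ := N - N1 with hN2def
    have hNR : (0:ℝ) < (N:ℝ) := by
      have : (1:ℝ) ≤ (N:ℝ) := by exact_mod_cast hN1'
      linarith
    have hαN0 : (0:ℝ) ≤ α * N := by positivity
    have hfl : ((N1:ℕ):ℝ) ≤ α * N := Nat.floor_le hαN0
    have hfl2 : α * N < (N1:ℝ) + 1 := Nat.lt_floor_add_one _
    have hN1pos : 0 < N1 := by
      rw [hN1def]
      exact Nat.floor_pos.2 h1N
    have hN1ltN : N1 < N := by
      have : (N1:ℝ) < (N:ℝ) := by nlinarith
      exact_mod_cast this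
    have hN2pos : 0 < N2 := by omega
    have hsumN : N1 + N2 = N := by omega
    have hcastn : (N1:ℝ) + (N2:ℝ) = (N:ℝ) := by
      have : ((N1 + N2 : ℕ):ℝ) = (N:ℝ) := by rw [hsumN]
      push_cast at this
      linarith
    -- hkey
    have hα'mem0 : (0:ℝ) ≤ (N1:ℝ) / ((N1:ℝ) + N2) := by positivity
    have hα'mem1 : (N1:ℝ) / ((N1:ℝ) + N2) ≤ 1 := by
      rw [div_le_one (by positivity)]
      have : (0:ℝ) ≤ (N2:ℝ) := by positivity
      linarith
    have hdist : |(N1:ℝ) / ((N1:ℝ) + N2) - α| ≤ 1 / ((N1:ℝ) + N2) := by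
      rw [hcastn]
      have he : (N1:ℝ) / (N:ℝ) - α = ((N1:ℝ) - α * N) / (N:ℝ) := by field_simp
      rw [he, abs_div, abs_of_pos hNR, div_le_div_iff_of_pos_right hNR]
      rw [abs_le]
      constructor <;> linarith
    have hkey : ∀ μ1 μ2 : ℝ, |μ1| ≤ 1 → |μ2| ≤ 1 →
        ((N1:ℝ) + N2) * pUP J11 J12 J22 h1 h2 ((N1:ℝ) / ((N1:ℝ) + N2)) μ1 μ2
          ≤ ((N1:ℝ) + N2) * S + L := by
      intro μ1 μ2 hm1 hm2
      have hmem : (μ1, μ2) ∈ K := by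
        rw [hK]
        exact ⟨abs_le.1 hm1, abs_le.1 hm2⟩
      have hle1 : pUP J11 J12 J22 h1 h2 α μ1 μ2 ≤ S := le_csSup hBdd ⟨(μ1, μ2), hmem, rfl⟩
      have hle2 := pUP_lipschitz J11 J12 J22 h1 h2 ((N1:ℝ) / ((N1:ℝ) + N2)) α μ1 μ2
        hα'mem0 hα'mem1 (le_of_lt hα0) (le_of_lt hα1) hm1 hm2
      have hnpos : (0:ℝ) < (N1:ℝ) + N2 := by rw [hcastn]; exact hNR
      have hld : L * |(N1:ℝ) / ((N1:ℝ) + N2) - α| ≤ L * (1 / ((N1:ℝ) + N2)) :=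
        mul_le_mul_of_nonneg_left hdist hL0
      have step : pUP J11 J12 J22 h1 h2 ((N1:ℝ) / ((N1:ℝ) + N2)) μ1 μ2
          ≤ S + L * (1 / ((N1:ℝ) + N2)) := by linarith
      calc ((N1:ℝ) + N2) * pUP J11 J12 J22 h1 h2 ((N1:ℝ) / ((N1:ℝ) + N2)) μ1 μ2
          ≤ ((N1:ℝ) + N2) * (S + L * (1 / ((N1:ℝ) + N2))) :=
            mul_le_mul_of_nonneg_left step (le_of_lt hnpos)
        _ = ((N1:ℝ) + N2) * S + L := by field_simp
    have hple := pressure_le J11 J12 J22 h1 h2 N1 N2 hN1pos hN2pos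
      (((N1:ℝ) + N2) * S + L) hkey
    -- final arithmetic
    have hlogb : Real.log ((2 * (N1:ℝ) + 1) * (2 * (N2:ℝ) + 1))
        ≤ 2 * Real.log (2 * (N:ℝ) + 1) := by
      have hN1le : (N1:ℝ) ≤ (N:ℝ) := by
        have : (0:ℝ) ≤ (N2:ℝ) := by positivity
        linarith [hcastn]
      have hN2le : (N2:ℝ) ≤ (N:ℝ) := by
        have : (0:ℝ) ≤ (N1:ℝ) := by positivity
        linarith [hcastn]
      have hb : (2 * (N1:ℝ) + 1) * (2 * (N2:ℝ) + 1) ≤ (2 * (N:ℝ) + 1) ^ 2 := by nlinarith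
      calc Real.log ((2 * (N1:ℝ) + 1) * (2 * (N2:ℝ) + 1))
          ≤ Real.log ((2 * (N:ℝ) + 1) ^ 2) := Real.log_le_log (by positivity) hb
        _ = 2 * Real.log (2 * (N:ℝ) + 1) := by
            rw [Real.log_pow]; push_cast; ring
    rw [hu, hv]
    simp only
    rw [← hN1def]
    have hfin : (Real.log ((2 * (N1:ℝ) + 1) * (2 * (N2:ℝ) + 1)) + (((N1:ℝ) + N2) * S + L))
        / ((N1:ℝ) + N2) ≤ S + (L + 2 * Real.log (2 * (N:ℝ) + 1)) / (N:ℝ) := by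
      rw [hcastn]
      rw [div_le_iff₀ hNR]
      have h2 : S + (L + 2 * Real.log (2 * (N:ℝ) + 1)) / (N:ℝ)
          = ((N:ℝ) * S + L + 2 * Real.log (2 * (N:ℝ) + 1)) / (N:ℝ) := by field_simp; ring
      rw [h2, div_mul_cancel₀ _ (ne_of_gt hNR)]
      linarith
    exact le_trans hple hfin
  have hlow : ∀ᶠ N : ℕ in atTop, -C ≤ u N := by
    filter_upwards [eventually_ge_atTop 1] with N hN
    have hpos : 0 < ⌊α * (N : ℝ)⌋₊ + (N - ⌊α * (N : ℝ)⌋₊) := by omega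
    exact pressure_lower J11 J12 J22 h1 h2 _ _ hpos
  have hcb : IsCoboundedUnder (· ≤ ·) atTop u :=
    Filter.isCoboundedUnder_le_of_eventually_le atTop hlow
  have hub : IsBoundedUnder (· ≤ ·) atTop v := htend.isBoundedUnder_le
  calc limsup u atTop ≤ limsup v atTop := limsup_le_limsup hev hcb hub
    _ = S := htend.limsup_eq
end

section
/- Finite-volume upper bound for the pressure: for any positive integers N1, N2 with N = N1 + N2, setting α = N1/N, one has p_N ≤ (1/N)·log(N1+1) + (1/N)·log(N2+1) + sup_{(μ1,μ2) ∈ [−1,1]²} p_UP(μ1, μ2). -/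
open Real Filter

namespace PFVUB

variable (N1 N2 : ℕ)

noncomputable def SA (σ : Fin (N1+N2) → Bool) : ℝ :=
  ∑ i : Fin (N1+N2), if (i:ℕ) < N1 then spin (σ i) else 0
noncomputable def SB (σ : Fin (N1+N2) → Bool) : ℝ :=
  ∑ i : Fin (N1+N2), if N1 ≤ (i:ℕ) then spin (σ i) else 0

lemma double_sum (P Q : Fin (N1+N2) → Prop) [DecidablePred P] [DecidablePred Q]
    (σ : Fin (N1+N2) → Bool) :
    ∑ i : Fin (N1+N2), ∑ j : Fin (N1+N2), (if P i ∧ Q j then spin (σ i) * spin (σ j) else 0)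
    = (∑ i : Fin (N1+N2), if P i then spin (σ i) else 0)
      * (∑ j : Fin (N1+N2), if Q j then spin (σ j) else 0) := by
  rw [Finset.sum_mul_sum]
  exact Finset.sum_congr rfl fun i _ => Finset.sum_congr rfl fun j _ => by
    split_ifs <;> simp_all

lemma ham_eq (J11 J12 J22 h1 h2 : ℝ) (σ : Fin (N1+N2) → Bool) :
    ham J11 J12 J22 h1 h2 N1 N2 σ
      = -(1 / (2 * ((N1 + N2 : ℕ) : ℝ))) *
          (J11 * (SA N1 N2 σ * SA N1 N2 σ) + 2 * J12 * (SA N1 N2 σ * SB N1 N2 σ)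
            + J22 * (SB N1 N2 σ * SB N1 N2 σ))
        - h1 * SA N1 N2 σ - h2 * SB N1 N2 σ := by
  unfold ham SA SB
  rw [double_sum N1 N2 (fun i => (i:ℕ) < N1) (fun j => (j:ℕ) < N1) σ,
    double_sum N1 N2 (fun i => (i:ℕ) < N1) (fun j => N1 ≤ (j:ℕ)) σ,
    double_sum N1 N2 (fun i => N1 ≤ (i:ℕ)) (fun j => N1 ≤ (j:ℕ)) σ]

lemma cardA : (Finset.univ.filter fun i : Fin (N1+N2) => (i:ℕ) < N1).card = N1 := by
  rw [Finset.card_filter]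
  rw [Fin.sum_univ_eq_sum_range (fun i => if i < N1 then 1 else 0)]
  rw [← Finset.card_filter]
  have : (Finset.range (N1+N2)).filter (fun i => i < N1) = Finset.range N1 := by
    ext i
    simp only [Finset.mem_filter, Finset.mem_range]
    omega
  rw [this, Finset.card_range]

lemma cardB : (Finset.univ.filter fun i : Fin (N1+N2) => N1 ≤ (i:ℕ)).card = N2 := by
  rw [Finset.card_filter]
  rw [Fin.sum_univ_eq_sum_range (fun i => if N1 ≤ i then 1 else 0)]
  rw [← Finset.card_filter]
  have : (Finset.range (N1+N2)).filter (fun i => N1 ≤ i) =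
      (Finset.range (N1+N2)) \ Finset.range N1 := by
    ext i
    simp only [Finset.mem_filter, Finset.mem_range, Finset.mem_sdiff]
    omega
  rw [this, Finset.card_sdiff_of_subset (Finset.range_subset_range.mpr (by omega))]
  simp

def cntA (σ : Fin (N1+N2) → Bool) : ℕ :=
  (Finset.univ.filter fun i : Fin (N1+N2) => (i:ℕ) < N1 ∧ σ i = true).card
def cntB (σ : Fin (N1+N2) → Bool) : ℕ :=
  (Finset.univ.filter fun i : Fin (N1+N2) => N1 ≤ (i:ℕ) ∧ σ i = true).card

lemma cntA_le (σ : Fin (N1+N2) → Bool) : cntA N1 N2 σ ≤ N1 := by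
  refine le_trans (Finset.card_le_card ?_) (le_of_eq (cardA N1 N2))
  intro i hi
  simp only [Finset.mem_filter] at *
  exact ⟨hi.1, hi.2.1⟩

lemma cntB_le (σ : Fin (N1+N2) → Bool) : cntB N1 N2 σ ≤ N2 := by
  refine le_trans (Finset.card_le_card ?_) (le_of_eq (cardB N1 N2))
  intro i hi
  simp only [Finset.mem_filter] at *
  exact ⟨hi.1, hi.2.1⟩

lemma SA_eq (σ : Fin (N1+N2) → Bool) :
    SA N1 N2 σ = 2 * (cntA N1 N2 σ : ℝ) - N1 := by
  unfold SA cntA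
  have h : ∀ i : Fin (N1+N2), (if (i:ℕ) < N1 then spin (σ i) else 0)
      = 2 * (if (i:ℕ) < N1 ∧ σ i = true then (1:ℝ) else 0)
        - (if (i:ℕ) < N1 then (1:ℝ) else 0) := by
    intro i
    by_cases hp : (i:ℕ) < N1 <;> cases hb : σ i <;> norm_num [spin, hp, hb]
  rw [Finset.sum_congr rfl (fun i _ => h i), Finset.sum_sub_distrib, ← Finset.mul_sum,
    Finset.sum_boole, Finset.sum_boole]
  norm_num
  rw [cardA]

lemma SB_eq (σ : Fin (N1+N2) → Bool) :
    SB N1 N2 σ = 2 * (cntB N1 N2 σ : ℝ) - N2 := by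
  unfold SB cntB
  have h : ∀ i : Fin (N1+N2), (if N1 ≤ (i:ℕ) then spin (σ i) else 0)
      = 2 * (if N1 ≤ (i:ℕ) ∧ σ i = true then (1:ℝ) else 0)
        - (if N1 ≤ (i:ℕ) then (1:ℝ) else 0) := by
    intro i
    by_cases hp : N1 ≤ (i:ℕ) <;> cases hb : σ i <;> norm_num [spin, hp, hb]
  rw [Finset.sum_congr rfl (fun i _ => h i), Finset.sum_sub_distrib, ← Finset.mul_sum,
    Finset.sum_boole, Finset.sum_boole]
  norm_num
  rw [cardB]

lemma sum_exp_factor (a b : ℝ) :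
    ∑ σ : Fin (N1+N2) → Bool, Real.exp (a * SA N1 N2 σ + b * SB N1 N2 σ)
      = (2 * Real.cosh a) ^ N1 * (2 * Real.cosh b) ^ N2 := by
  have key : ∀ σ : Fin (N1+N2) → Bool,
      Real.exp (a * SA N1 N2 σ + b * SB N1 N2 σ)
        = ∏ i : Fin (N1+N2), Real.exp ((if (i:ℕ) < N1 then a else b) * spin (σ i)) := by
    intro σ
    rw [← Real.exp_sum]
    congr 1
    unfold SA SB
    rw [Finset.mul_sum, Finset.mul_sum, ← Finset.sum_add_distrib]
    refine Finset.sum_congr rfl fun i _ => ?_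
    by_cases hp : (i:ℕ) < N1
    · simp [hp, (by omega : ¬ N1 ≤ (i:ℕ))]
    · simp [hp, (by omega : N1 ≤ (i:ℕ))]
  calc ∑ σ : Fin (N1+N2) → Bool, Real.exp (a * SA N1 N2 σ + b * SB N1 N2 σ)
      = ∑ σ : Fin (N1+N2) → Bool, ∏ i : Fin (N1+N2),
          Real.exp ((if (i:ℕ) < N1 then a else b) * spin (σ i)) :=
        Finset.sum_congr rfl fun σ _ => key σ
    _ = ∏ i : Fin (N1+N2), ∑ s : Bool, Real.exp ((if (i:ℕ) < N1 then a else b) * spin s) :=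
        (Fintype.prod_sum fun (i : Fin (N1+N2)) (s : Bool) =>
          Real.exp ((if (i:ℕ) < N1 then a else b) * spin s)).symm
    _ = ∏ i : Fin (N1+N2), (if (i:ℕ) < N1 then 2 * Real.cosh a else 2 * Real.cosh b) := by
        refine Finset.prod_congr rfl fun i _ => ?_
        rw [Fintype.sum_bool]
        by_cases hp : (i:ℕ) < N1 <;>
          simp [hp, spin, Real.cosh_eq, mul_comm, mul_one, mul_neg_one] <;> ring
    _ = (2 * Real.cosh a) ^ N1 * (2 * Real.cosh b) ^ N2 := by
        rw [Finset.prod_ite, Finset.prod_const, Finset.prod_const]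
        have hA := cardA N1 N2
        simp only [not_lt]
        rw [hA, cardB]

lemma fiber_bound (J11 J12 J22 h1 h2 : ℝ) (hN1 : 0 < N1) (hN2 : 0 < N2)
    (k1 k2 : ℕ) (hk1 : k1 ≤ N1) (hk2 : k2 ≤ N2) :
    ∑ σ ∈ Finset.univ.filter
        (fun σ : Fin (N1+N2) → Bool => cntA N1 N2 σ = k1 ∧ cntB N1 N2 σ = k2),
        Real.exp (-(ham J11 J12 J22 h1 h2 N1 N2 σ))
      ≤ Real.exp (((N1+N2 : ℕ):ℝ) * pUP J11 J12 J22 h1 h2 ((N1:ℝ)/((N1+N2:ℕ):ℝ))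
          ((2*k1 - N1)/N1) ((2*k2 - N2)/N2)) := by
  have hN1R : (0:ℝ) < N1 := by exact_mod_cast hN1
  have hN2R : (0:ℝ) < N2 := by exact_mod_cast hN2
  have hnR : (0:ℝ) < ((N1+N2:ℕ):ℝ) := by positivity
  set n : ℝ := ((N1+N2:ℕ):ℝ) with hn
  have hncast : n = (N1:ℝ) + (N2:ℝ) := by rw [hn]; push_cast; ring
  set α : ℝ := (N1:ℝ)/n with hα
  set μ1 : ℝ := (2*(k1:ℝ) - N1)/N1 with hμ1
  set μ2 : ℝ := (2*(k2:ℝ) - N2)/N2 with hμ2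
  set a : ℝ := J11*α*μ1 + J12*(1-α)*μ2 + h1 with ha
  set b : ℝ := J12*α*μ1 + J22*(1-α)*μ2 + h2 with hb
  set C : ℝ := -(n/2)*(J11*α^2*μ1^2 + 2*J12*α*(1-α)*μ1*μ2 + J22*(1-α)^2*μ2^2) with hC
  have hham : ∀ σ ∈ Finset.univ.filter
      (fun σ : Fin (N1+N2) → Bool => cntA N1 N2 σ = k1 ∧ cntB N1 N2 σ = k2),
      -(ham J11 J12 J22 h1 h2 N1 N2 σ) = C + a * SA N1 N2 σ + b * SB N1 N2 σ := by
    intro σ hσ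
    simp only [Finset.mem_filter, Finset.mem_univ, true_and] at hσ
    have hSA : SA N1 N2 σ = (N1:ℝ) * μ1 := by
      rw [SA_eq, hσ.1, hμ1]
      field_simp
    have hSB : SB N1 N2 σ = (N2:ℝ) * μ2 := by
      rw [SB_eq, hσ.2, hμ2]
      field_simp
    rw [ham_eq, hSA, hSB, hC, ha, hb, hα, ← hn, hncast]
    field_simp
    ring
  calc ∑ σ ∈ Finset.univ.filter
        (fun σ : Fin (N1+N2) → Bool => cntA N1 N2 σ = k1 ∧ cntB N1 N2 σ = k2),
        Real.exp (-(ham J11 J12 J22 h1 h2 N1 N2 σ))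
      = ∑ σ ∈ Finset.univ.filter
        (fun σ : Fin (N1+N2) → Bool => cntA N1 N2 σ = k1 ∧ cntB N1 N2 σ = k2),
        Real.exp (C + a * SA N1 N2 σ + b * SB N1 N2 σ) :=
        Finset.sum_congr rfl fun σ hσ => by rw [hham σ hσ]
    _ ≤ ∑ σ : Fin (N1+N2) → Bool, Real.exp (C + a * SA N1 N2 σ + b * SB N1 N2 σ) :=
        Finset.sum_le_sum_of_subset_of_nonneg (Finset.filter_subset _ _)
          (fun _ _ _ => (Real.exp_pos _).le)
    _ = Real.exp C * ∑ σ : Fin (N1+N2) → Bool, Real.exp (a * SA N1 N2 σ + b * SB N1 N2 σ) := by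
        rw [Finset.mul_sum]
        exact Finset.sum_congr rfl fun σ _ => by rw [← Real.exp_add]; ring_nf
    _ = Real.exp C * ((2 * Real.cosh a) ^ N1 * (2 * Real.cosh b) ^ N2) := by
        rw [sum_exp_factor]
    _ = Real.exp (C + N1 * Real.log (2 * Real.cosh a) + N2 * Real.log (2 * Real.cosh b)) := by
        have hca : (0:ℝ) < 2 * Real.cosh a := by positivity
        have hcb : (0:ℝ) < 2 * Real.cosh b := by positivity
        rw [Real.exp_add, Real.exp_add, Real.exp_nat_mul, Real.exp_nat_mul,
          Real.exp_log hca, Real.exp_log hcb, mul_assoc]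
    _ = Real.exp (n * pUP J11 J12 J22 h1 h2 α μ1 μ2) := by
        congr 1
        rw [pUP, Real.log_mul two_ne_zero (Real.cosh_pos a).ne',
          Real.log_mul two_ne_zero (Real.cosh_pos b).ne', hC, ← ha, ← hb]
        have hαn : α * n = N1 := by rw [hα]; field_simp
        have h1αn : (1 - α) * n = N2 := by rw [hα]; field_simp; rw [hncast]; ring
        linear_combination (-Real.log 2) * hncast + (-Real.log (Real.cosh a)) * hαn
          + (-Real.log (Real.cosh b)) * h1αn

end PFVUB

/-- finite-volume upper bound for the pressure, with `α = N1/N`. -/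
theorem pressure_finite_volume_upper_bound
    (J11 J12 J22 h1 h2 : ℝ) (hJ11 : 0 < J11) (hJ22 : 0 < J22)
    (N1 N2 : ℕ) (hN1 : 0 < N1) (hN2 : 0 < N2) :
    pressure J11 J12 J22 h1 h2 N1 N2 ≤
      (1 / ((N1 + N2 : ℕ) : ℝ)) * Real.log ((N1 : ℝ) + 1) +
      (1 / ((N1 + N2 : ℕ) : ℝ)) * Real.log ((N2 : ℝ) + 1) +
      sSup ((fun μ : ℝ × ℝ =>
          pUP J11 J12 J22 h1 h2 ((N1 : ℝ) / ((N1 + N2 : ℕ) : ℝ)) μ.1 μ.2) ''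
        (Set.Icc (-1 : ℝ) 1 ×ˢ Set.Icc (-1 : ℝ) 1)) := by
  classical
  have hN1R : (0:ℝ) < N1 := by exact_mod_cast hN1
  have hN2R : (0:ℝ) < N2 := by exact_mod_cast hN2
  have hnR : (0:ℝ) < ((N1+N2:ℕ):ℝ) := by positivity
  set n : ℝ := ((N1+N2:ℕ):ℝ) with hn
  set α : ℝ := (N1:ℝ)/n with hα
  set S : ℝ := sSup ((fun μ : ℝ × ℝ =>
      pUP J11 J12 J22 h1 h2 α μ.1 μ.2) ''
    (Set.Icc (-1 : ℝ) 1 ×ˢ Set.Icc (-1 : ℝ) 1)) with hS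
  -- continuity and boundedness
  have hcont : Continuous (fun μ : ℝ×ℝ => pUP J11 J12 J22 h1 h2 α μ.1 μ.2) := by
    unfold pUP
    have c1 : Continuous fun μ : ℝ×ℝ => J11 * α * μ.1 + J12 * (1-α) * μ.2 + h1 := by
      continuity
    have c2 : Continuous fun μ : ℝ×ℝ => J12 * α * μ.1 + J22 * (1-α) * μ.2 + h2 := by
      continuity
    have l1 : Continuous fun μ : ℝ×ℝ =>
        Real.log (Real.cosh (J11 * α * μ.1 + J12 * (1-α) * μ.2 + h1)) :=
      (Real.continuous_cosh.comp c1).log (fun x => (Real.cosh_pos _).ne')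
    have l2 : Continuous fun μ : ℝ×ℝ =>
        Real.log (Real.cosh (J12 * α * μ.1 + J22 * (1-α) * μ.2 + h2)) :=
      (Real.continuous_cosh.comp c2).log (fun x => (Real.cosh_pos _).ne')
    exact ((continuous_const.sub (by continuity)).add (continuous_const.mul l1)).add
      (continuous_const.mul l2)
  have hbdd : BddAbove ((fun μ : ℝ×ℝ => pUP J11 J12 J22 h1 h2 α μ.1 μ.2) ''
      (Set.Icc (-1 : ℝ) 1 ×ˢ Set.Icc (-1 : ℝ) 1)) :=
    ((isCompact_Icc.prod isCompact_Icc).image hcont).bddAbove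
  have hle : ∀ k1 k2 : ℕ, k1 ≤ N1 → k2 ≤ N2 →
      pUP J11 J12 J22 h1 h2 α ((2*(k1:ℝ) - N1)/N1) ((2*(k2:ℝ) - N2)/N2) ≤ S := by
    intro k1 k2 hk1 hk2
    refine le_csSup hbdd ⟨((2*(k1:ℝ) - N1)/N1, (2*(k2:ℝ) - N2)/N2), ?_, rfl⟩
    have hk1R : (k1:ℝ) ≤ N1 := by exact_mod_cast hk1
    have hk2R : (k2:ℝ) ≤ N2 := by exact_mod_cast hk2
    have hk1R0 : (0:ℝ) ≤ (k1:ℝ) := Nat.cast_nonneg _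
    have hk2R0 : (0:ℝ) ≤ (k2:ℝ) := Nat.cast_nonneg _
    constructor
    · constructor
      · rw [le_div_iff₀ hN1R]; linarith
      · rw [div_le_one hN1R]; linarith
    · constructor
      · rw [le_div_iff₀ hN2R]; linarith
      · rw [div_le_one hN2R]; linarith
  -- partition function
  set Z : ℝ := ∑ σ : Fin (N1+N2) → Bool, Real.exp (-(ham J11 J12 J22 h1 h2 N1 N2 σ)) with hZ
  have hZpos : 0 < Z := by
    rw [hZ]
    exact Finset.sum_pos (fun σ _ => Real.exp_pos _) Finset.univ_nonempty
  -- fibering over magnetizations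
  have hfiber : Z = ∑ k : Fin (N1+1) × Fin (N2+1),
      ∑ σ ∈ Finset.univ.filter (fun σ : Fin (N1+N2) → Bool =>
        ((⟨PFVUB.cntA N1 N2 σ, Nat.lt_succ_of_le (PFVUB.cntA_le N1 N2 σ)⟩ : Fin (N1+1)),
         (⟨PFVUB.cntB N1 N2 σ, Nat.lt_succ_of_le (PFVUB.cntB_le N1 N2 σ)⟩ : Fin (N2+1))) = k),
        Real.exp (-(ham J11 J12 J22 h1 h2 N1 N2 σ)) := by
    rw [hZ, ← Finset.sum_fiberwise Finset.univ
      (fun σ : Fin (N1+N2) → Bool =>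
        ((⟨PFVUB.cntA N1 N2 σ, Nat.lt_succ_of_le (PFVUB.cntA_le N1 N2 σ)⟩ : Fin (N1+1)),
         (⟨PFVUB.cntB N1 N2 σ, Nat.lt_succ_of_le (PFVUB.cntB_le N1 N2 σ)⟩ : Fin (N2+1))))
      (fun σ => Real.exp (-(ham J11 J12 J22 h1 h2 N1 N2 σ)))]
  have hZle : Z ≤ ((N1+1) * (N2+1) : ℕ) * Real.exp (n * S) := by
    rw [hfiber]
    calc ∑ k : Fin (N1+1) × Fin (N2+1), ∑ σ ∈ Finset.univ.filter
          (fun σ : Fin (N1+N2) → Bool =>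
            ((⟨PFVUB.cntA N1 N2 σ, Nat.lt_succ_of_le (PFVUB.cntA_le N1 N2 σ)⟩ : Fin (N1+1)),
             (⟨PFVUB.cntB N1 N2 σ, Nat.lt_succ_of_le (PFVUB.cntB_le N1 N2 σ)⟩ : Fin (N2+1))) = k),
          Real.exp (-(ham J11 J12 J22 h1 h2 N1 N2 σ))
        ≤ ∑ k : Fin (N1+1) × Fin (N2+1), Real.exp (n * S) := by
          refine Finset.sum_le_sum fun k _ => ?_
          have hfe : Finset.univ.filter (fun σ : Fin (N1+N2) → Bool =>
              ((⟨PFVUB.cntA N1 N2 σ, Nat.lt_succ_of_le (PFVUB.cntA_le N1 N2 σ)⟩ : Fin (N1+1)),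
               (⟨PFVUB.cntB N1 N2 σ, Nat.lt_succ_of_le (PFVUB.cntB_le N1 N2 σ)⟩ : Fin (N2+1))) = k)
            = Finset.univ.filter (fun σ : Fin (N1+N2) → Bool =>
                PFVUB.cntA N1 N2 σ = (k.1 : ℕ) ∧ PFVUB.cntB N1 N2 σ = (k.2 : ℕ)) := by
            ext σ
            simp [Prod.ext_iff, Fin.ext_iff]
          rw [hfe]
          refine le_trans (PFVUB.fiber_bound N1 N2 J11 J12 J22 h1 h2 hN1 hN2
            (k.1 : ℕ) (k.2 : ℕ) (Nat.lt_succ_iff.mp k.1.isLt) (Nat.lt_succ_iff.mp k.2.isLt)) ?_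
          rw [Real.exp_le_exp]
          exact mul_le_mul_of_nonneg_left
            (hle (k.1 : ℕ) (k.2 : ℕ) (Nat.lt_succ_iff.mp k.1.isLt) (Nat.lt_succ_iff.mp k.2.isLt))
            hnR.le
      _ = ((N1+1) * (N2+1) : ℕ) * Real.exp (n * S) := by
          rw [Finset.sum_const, Finset.card_univ]
          simp [Fintype.card_prod, mul_comm]
  -- conclude
  have hlog : Real.log Z ≤ Real.log ((N1:ℝ)+1) + Real.log ((N2:ℝ)+1) + n * S := by
    calc Real.log Z ≤ Real.log (((N1+1) * (N2+1) : ℕ) * Real.exp (n * S)) :=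
          Real.log_le_log hZpos hZle
      _ = Real.log ((N1:ℝ)+1) + Real.log ((N2:ℝ)+1) + n * S := by
          have p1 : ((N1:ℝ)+1) ≠ 0 := by positivity
          have p2 : ((N2:ℝ)+1) ≠ 0 := by positivity
          push_cast
          rw [Real.log_mul (by positivity) (Real.exp_ne_zero _), Real.log_mul p1 p2,
            Real.log_exp]
  have hfin : pressure J11 J12 J22 h1 h2 N1 N2
      ≤ (1/n) * (Real.log ((N1:ℝ)+1) + Real.log ((N2:ℝ)+1) + n * S) := by
    rw [pressure, ← hn, ← hZ]
    exact mul_le_mul_of_nonneg_left hlog (by positivity)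
  refine le_trans hfin (le_of_eq ?_)
  field_simp
end
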